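/- arXiv:2010.15337 — 5 statements merged into one kernel-verified Lean document; each statement's English description precedes it below -/
import Mathlib

section
/- Let H be a bounded self-adjoint operator on a complex Hilbert space, P an orthogonal projection with Q = 1 − P, and suppose PHP ≤ aP on ran P and QHQ ≥ bQ on ran Q with a < 0 < b. Then H is invertible with ‖H⁻¹‖ ≤ max(|a|⁻¹, b⁻¹). -/
/-- Key step in the Level Repulsion Principle: a bounded self-adjoint operator `H`
whose compression to the range of an orthogonal projection `P` is `≤ a < 0` and whose
compression to the range of `Q = 1 - P` is `≥ b > 0` is invertible with
`‖H⁻¹‖ ≤ max |a|⁻¹ b⁻¹`. -/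
theorem invertible_of_block_bounds
    {E : Type*} [NormedAddCommGroup E] [InnerProductSpace ℂ E] [CompleteSpace E]
    (H P : E →L[ℂ] E) (hH : IsSelfAdjoint H) (hP : IsSelfAdjoint P)
    (hPidem : P ∘L P = P)
    (a b : ℝ) (ha : a < 0) (hb : 0 < b)
    (hPHP : ∀ ψ : E, P ψ = ψ → (inner ℂ ψ (H ψ) : ℂ).re ≤ a * ‖ψ‖ ^ 2)
    (hQHQ : ∀ ψ : E, P ψ = 0 → b * ‖ψ‖ ^ 2 ≤ (inner ℂ ψ (H ψ) : ℂ).re) :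
    ∃ T : E →L[ℂ] E, H ∘L T = 1 ∧ T ∘L H = 1 ∧ ‖T‖ ≤ max |a|⁻¹ b⁻¹ := by
  set c : ℝ := min (-a) b with hc_def
  have hc : 0 < c := lt_min (by linarith) hb
  have hHsymm := hH.isSymmetric
  have hPsymm := hP.isSymmetric
  -- key lower bound: c * ‖ψ‖ ≤ ‖H ψ‖
  have key : ∀ ψ : E, c * ‖ψ‖ ≤ ‖H ψ‖ := by
    intro ψ
    set u := P ψ with hu
    set v := ψ - P ψ with hv
    have huv : ψ = u + v := by simp [hu, hv]
    have hPu : P u = u := by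
      have := congrFun (congrArg (fun T : E →L[ℂ] E => (T : E → E)) hPidem) ψ
      simpa using this
    have hPv : P v = 0 := by
      have hPPψ : P (P ψ) = P ψ := hPu
      simp [hv, map_sub, hPPψ]
    have horth : (inner ℂ u v : ℂ) = 0 := by
      have h1 : (inner ℂ u v : ℂ) = inner ℂ ψ (P v) := hPsymm ψ v
      rw [h1, hPv, inner_zero_right]
    have hpyth : ‖ψ‖ ^ 2 = ‖u‖ ^ 2 + ‖v‖ ^ 2 := by
      rw [huv]
      simpa [pow_two] using norm_add_sq_eq_norm_sq_add_norm_sq_of_inner_eq_zero u v horth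
    have hpyth' : ‖u - v‖ ^ 2 = ‖u‖ ^ 2 + ‖v‖ ^ 2 := by
      have horth' : (inner ℂ u (-v) : ℂ) = 0 := by rw [inner_neg_right, horth, neg_zero]
      have := norm_add_sq_eq_norm_sq_add_norm_sq_of_inner_eq_zero u (-v) horth'
      simpa [sub_eq_add_neg, pow_two] using this
    have hnormeq : ‖u - v‖ = ‖ψ‖ := by
      have h1 : ‖u - v‖ ^ 2 = ‖ψ‖ ^ 2 := by rw [hpyth, hpyth']
      nlinarith [norm_nonneg (u - v), norm_nonneg ψ]
    -- cross terms cancel in real part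
    have hcross : (inner ℂ u (H v) : ℂ).re = (inner ℂ v (H u) : ℂ).re := by
      have h1 : (inner ℂ v (H u) : ℂ) = inner ℂ (H v) u := (hHsymm v u).symm
      have h2 : (inner ℂ (H v) u : ℂ) = starRingEnd ℂ (inner ℂ u (H v)) :=
        (inner_conj_symm (H v) u).symm
      rw [h1, h2, Complex.conj_re]
    have hexpand : (inner ℂ (u - v) (H ψ) : ℂ).re
        = (inner ℂ u (H u) : ℂ).re - (inner ℂ v (H v) : ℂ).re := by
      rw [huv]
      simp only [map_add, inner_sub_left, inner_add_right, Complex.sub_re, Complex.add_re]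
      have := hcross
      ring_nf
      linarith [hcross]
    have h1 : (inner ℂ u (H u) : ℂ).re ≤ a * ‖u‖ ^ 2 := hPHP u hPu
    have h2 : b * ‖v‖ ^ 2 ≤ (inner ℂ v (H v) : ℂ).re := hQHQ v hPv
    have hbound : (inner ℂ (u - v) (H ψ) : ℂ).re ≤ -(c * ‖ψ‖ ^ 2) := by
      rw [hexpand, hpyth]
      have hca : c ≤ -a := min_le_left _ _
      have hcb : c ≤ b := min_le_right _ _
      nlinarith [sq_nonneg ‖u‖, sq_nonneg ‖v‖]
    have habs : c * ‖ψ‖ ^ 2 ≤ ‖(inner ℂ (u - v) (H ψ) : ℂ)‖ := by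
      calc c * ‖ψ‖ ^ 2 ≤ -(inner ℂ (u - v) (H ψ) : ℂ).re := by linarith
      _ ≤ |(inner ℂ (u - v) (H ψ) : ℂ).re| := neg_le_abs _
      _ ≤ ‖(inner ℂ (u - v) (H ψ) : ℂ)‖ := Complex.abs_re_le_norm _
    have hcs : ‖(inner ℂ (u - v) (H ψ) : ℂ)‖ ≤ ‖ψ‖ * ‖H ψ‖ := by
      calc ‖(inner ℂ (u - v) (H ψ) : ℂ)‖ ≤ ‖u - v‖ * ‖H ψ‖ := norm_inner_le_norm _ _
      _ = ‖ψ‖ * ‖H ψ‖ := by rw [hnormeq]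
    rcases eq_or_ne ψ 0 with rfl | hψ
    · simp
    · have hpos : 0 < ‖ψ‖ := norm_pos_iff.mpr hψ
      have : c * ‖ψ‖ ^ 2 ≤ ‖ψ‖ * ‖H ψ‖ := le_trans habs hcs
      nlinarith
  -- injectivity
  have hker : LinearMap.ker (H : E →ₗ[ℂ] E) = ⊥ := by
    rw [LinearMap.ker_eq_bot']
    intro x hx
    have := key x
    rw [show H x = 0 from hx] at this
    simp only [norm_zero] at this
    have : ‖x‖ ≤ 0 := by nlinarith
    simpa using norm_le_zero_iff.mp this
  -- antilipschitz, closed range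
  have hanti : AntilipschitzWith ⟨c⁻¹, by positivity⟩ H := by
    apply H.antilipschitz_of_bound
    intro x
    have := key x
    show ‖x‖ ≤ c⁻¹ * ‖H x‖
    calc ‖x‖ = c⁻¹ * (c * ‖x‖) := by field_simp
    _ ≤ c⁻¹ * ‖H x‖ := mul_le_mul_of_nonneg_left (key x) (by positivity)
  have hclosed : IsClosed (Set.range H) := hanti.isClosed_range H.uniformContinuous
  have hclosed' : IsClosed ((LinearMap.range (H : E →ₗ[ℂ] E) : Submodule ℂ E) : Set E) := by
    have : ((LinearMap.range (H : E →ₗ[ℂ] E) : Submodule ℂ E) : Set E) = Set.range H := by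
      ext x; simp [LinearMap.mem_range]
    rw [this]; exact hclosed
  -- dense range
  have horthbot : (LinearMap.range (H : E →ₗ[ℂ] E))ᗮ = ⊥ := by
    rw [Submodule.eq_bot_iff]
    intro x hx
    have hx0 : H x = 0 := by
      apply ext_inner_left ℂ
      intro z
      have h := (Submodule.mem_orthogonal _ x).mp hx (H z) (LinearMap.mem_range_self _ z)
      rw [inner_zero_right]
      exact (hHsymm z x).symm.trans h
    have := key x
    rw [hx0] at this
    simp only [norm_zero] at this
    have : ‖x‖ ≤ 0 := by nlinarith
    simpa using norm_le_zero_iff.mp this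
  have hrange : LinearMap.range (H : E →ₗ[ℂ] E) = ⊤ := by
    have h1 : (LinearMap.range (H : E →ₗ[ℂ] E)).topologicalClosure = LinearMap.range (H : E →ₗ[ℂ] E) :=
      hclosed'.submodule_topologicalClosure_eq
    have h2 : (LinearMap.range (H : E →ₗ[ℂ] E)).topologicalClosure = ⊤ :=
      Submodule.topologicalClosure_eq_top_iff.mpr horthbot
    rw [← h1, h2]
  -- construct the inverse
  set e := ContinuousLinearEquiv.ofBijective H hker hrange with he
  refine ⟨e.symm, ?_, ?_, ?_⟩
  · ext x
    have : H (e.symm x) = e (e.symm x) := by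
      rw [ContinuousLinearEquiv.coeFn_ofBijective]
    simp [this]
  · ext x
    have hex : e x = H x := by rw [ContinuousLinearEquiv.coeFn_ofBijective]
    simp [← hex]
  · have hTbound : ∀ x : E, ‖(e.symm : E →L[ℂ] E) x‖ ≤ c⁻¹ * ‖x‖ := by
      intro x
      have hHe : H (e.symm x) = x := by
        have : H (e.symm x) = e (e.symm x) := by
          rw [ContinuousLinearEquiv.coeFn_ofBijective]
        rw [this, ContinuousLinearEquiv.apply_symm_apply]
      have := key (e.symm x)
      rw [hHe] at this
      calc ‖(e.symm : E →L[ℂ] E) x‖ = c⁻¹ * (c * ‖(e.symm : E →L[ℂ] E) x‖) := by field_simp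
      _ ≤ c⁻¹ * ‖x‖ := by
          apply mul_le_mul_of_nonneg_left _ (by positivity)
          exact this
    have hcmax : c⁻¹ ≤ max |a|⁻¹ b⁻¹ := by
      rcases min_cases (-a) b with ⟨h1, _⟩ | ⟨h1, _⟩
      · rw [hc_def, h1, show |a| = -a from abs_of_neg ha]
        exact le_max_left _ _
      · rw [hc_def, h1]
        exact le_max_right _ _
    apply ContinuousLinearMap.opNorm_le_bound
    · have : (0:ℝ) ≤ c⁻¹ := by positivity
      linarith
    · intro x
      calc ‖(e.symm : E →L[ℂ] E) x‖ ≤ c⁻¹ * ‖x‖ := hTbound x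
      _ ≤ max |a|⁻¹ b⁻¹ * ‖x‖ :=
          mul_le_mul_of_nonneg_right hcmax (norm_nonneg x)
end

section
/- Let H_Λ be a frustration-free Hamiltonian with ground state projection P_Λ, ground state functional ω_Λ(A) = Tr[P_Λ A]/Tr[P_Λ], and Ω : ℝ → [0,∞) non-increasing. Suppose x ∈ Λ has indistinguishability radius r, i.e. for all 0 ≤ k ≤ n ≤ r and A ∈ A_{b_x(k)}: ‖P_{b_x(n)} A P_{b_x(n)} − ω_Λ(A) P_{b_x(n)}‖ ≤ |b_x(k)| ‖A‖ Ω(n−k). Then for any 0 < k ≤ n ≤ r and A ∈ A_{b_x(k)}: |‖A P_{b_x(n)}‖ − ‖A P_Λ‖| ≤ ‖A‖ √(2 |b_x(k)| Ω(n−k)). -/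
set_option maxHeartbeats 1000000 in


/-- **Proposition 2.1** (consequence of LTQO / indistinguishability radius).
`P n` denote the frustration-free ground state projections of the balls `b_x(n)`,
`PΛ ≠ 0` the global ground state projection, `ω` the global ground state functional
`ω(B) = Tr[PΛ B]/Tr[PΛ]`, `Alg m` the local observable algebras of the balls `b_x(m)`,
and `Ω` a non-increasing nonnegative decay function.  If `x` has indistinguishability
radius `r`, then for `0 < k ≤ n ≤ r` and `A` supported in `b_x(k)`:
`|‖A P_{b_x(n)}‖ − ‖A P_Λ‖| ≤ ‖A‖ √(2 |b_x(k)| Ω(n−k))`. -/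
theorem ltqo_norm_comparison
    {E : Type*} [NormedAddCommGroup E] [InnerProductSpace ℂ E] [CompleteSpace E]
    [FiniteDimensional ℂ E]
    (vol : ℕ → ℕ) (Ω : ℝ → ℝ) (hΩ0 : ∀ t, 0 ≤ Ω t) (hΩanti : Antitone Ω)
    (P : ℕ → (E →L[ℂ] E)) (PΛ : E →L[ℂ] E)
    (hPsa : ∀ n, IsSelfAdjoint (P n)) (hPidem : ∀ n, P n * P n = P n)
    (hPΛsa : IsSelfAdjoint PΛ) (hPΛidem : PΛ * PΛ = PΛ) (hPΛne : PΛ ≠ 0)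
    (r k n : ℕ) (hk0 : 0 < k) (hkn : k ≤ n) (hnr : n ≤ r)
    (hFF : ∀ m, k ≤ m → m ≤ r → P m * PΛ = PΛ ∧ PΛ * P m = PΛ)
    (Alg : ℕ → StarSubalgebra ℂ (E →L[ℂ] E))
    (A : E →L[ℂ] E) (hA : A ∈ Alg k)
    (ω : (E →L[ℂ] E) → ℂ)
    (hω : ∀ B, ω B =
      LinearMap.trace ℂ E ((PΛ * B : E →L[ℂ] E) : E →ₗ[ℂ] E) /
        LinearMap.trace ℂ E ((PΛ : E →L[ℂ] E) : E →ₗ[ℂ] E))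
    (hLTQO : ∀ m n' : ℕ, m ≤ n' → n' ≤ r → ∀ B ∈ Alg m,
        ‖P n' * B * P n' - ω B • P n'‖ ≤ (vol m : ℝ) * ‖B‖ * Ω ((n' : ℝ) - (m : ℝ))) :
    |‖A * P n‖ - ‖A * PΛ‖| ≤
      ‖A‖ * Real.sqrt (2 * (vol k : ℝ) * Ω ((n : ℝ) - (k : ℝ))) := by
  obtain ⟨h1, h2⟩ := hFF n hkn hnr
  set Q := P n with hQdef
  have hQsa := hPsa n
  have hQidem := hPidem n
  have hQne : Q ≠ 0 := by
    intro h
    exact hPΛne (by rw [← h1, h, zero_mul])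
  have normQ : ‖Q‖ = 1 := by
    have h := CStarRing.norm_star_mul_self (x := Q)
    rw [hQsa.star_eq, hQidem, ← hQdef] at h
    have hpos : (0:ℝ) < ‖Q‖ := norm_pos_iff.mpr hQne
    nlinarith [h, hpos]
  have normPΛ : ‖PΛ‖ = 1 := by
    have h := CStarRing.norm_star_mul_self (x := PΛ)
    have hpos : (0:ℝ) < ‖PΛ‖ := norm_pos_iff.mpr hPΛne
    rw [hPΛsa.star_eq, hPΛidem] at h
    nlinarith [h, hpos]
  set B := star A * A with hBdef
  have hB : B ∈ Alg k := mul_mem (star_mem hA) hA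
  set c := ω B with hcdef
  set ε := (vol k : ℝ) * ‖B‖ * Ω ((n : ℝ) - (k : ℝ)) with hεdef
  have hε0 : 0 ≤ ε := by
    apply mul_nonneg (mul_nonneg (by positivity) (norm_nonneg _)) (hΩ0 _)
  have hL : ‖Q * B * Q - c • Q‖ ≤ ε := hLTQO k n hkn hnr B hB
  have key : PΛ * (Q * B * Q - c • Q) * PΛ = PΛ * B * PΛ - c • PΛ := by
    have e1 : PΛ * (Q * B * Q - c • Q) * PΛ
        = PΛ * Q * B * (Q * PΛ) - c • (PΛ * Q * PΛ) := by noncomm_ring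
    rw [e1, h1, h2, hPΛidem]
  have hL2 : ‖PΛ * B * PΛ - c • PΛ‖ ≤ ε := by
    rw [← key]
    calc ‖PΛ * (Q * B * Q - c • Q) * PΛ‖
        ≤ ‖PΛ * (Q * B * Q - c • Q)‖ * ‖PΛ‖ := norm_mul_le _ _
      _ ≤ ‖PΛ‖ * ‖Q * B * Q - c • Q‖ * ‖PΛ‖ := by
          gcongr; exact norm_mul_le _ _
      _ ≤ ε := by rw [normPΛ]; linarith
  set a := ‖A * Q‖ with hadef
  set b := ‖A * PΛ‖ with hbdef
  have ha2 : a ^ 2 = ‖Q * B * Q‖ := by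
    rw [sq, hadef, ← CStarRing.norm_star_mul_self (x := A * Q)]
    congr 1
    rw [star_mul, hQsa.star_eq, hBdef]
    noncomm_ring
  have hb2 : b ^ 2 = ‖PΛ * B * PΛ‖ := by
    rw [sq, hbdef, ← CStarRing.norm_star_mul_self (x := A * PΛ)]
    congr 1
    rw [star_mul, hPΛsa.star_eq, hBdef]
    noncomm_ring
  have hcQ : ‖c • Q‖ = ‖c‖ := by rw [norm_smul, normQ, mul_one]
  have hcP : ‖c • PΛ‖ = ‖c‖ := by rw [norm_smul, normPΛ, mul_one]
  have t1 : |‖Q * B * Q‖ - ‖c‖| ≤ ε := by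
    rw [← hcQ]; exact (abs_norm_sub_norm_le _ _).trans hL
  have t2 : |‖PΛ * B * PΛ‖ - ‖c‖| ≤ ε := by
    rw [← hcP]; exact (abs_norm_sub_norm_le _ _).trans hL2
  have hsq : |a ^ 2 - b ^ 2| ≤ 2 * ε := by
    rw [ha2, hb2]
    have := abs_sub_abs_le_abs_sub ‖Q * B * Q‖ ‖PΛ * B * PΛ‖
    rw [abs_le] at t1 t2 ⊢
    constructor <;> linarith [t1.1, t1.2, t2.1, t2.2]
  have ha0 : 0 ≤ a := norm_nonneg _
  have hb0 : 0 ≤ b := norm_nonneg _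
  have habs : |a - b| ^ 2 ≤ 2 * ε := by
    rw [abs_le] at hsq
    rcases le_total a b with h | h
    · rw [abs_of_nonpos (by linarith)]
      nlinarith [mul_nonneg ha0 (sub_nonneg.mpr h), hsq.2, hsq.1]
    · rw [abs_of_nonneg (by linarith)]
      nlinarith [mul_nonneg hb0 (sub_nonneg.mpr h), hsq.2, hsq.1]
  have hBnorm : ‖B‖ = ‖A‖ ^ 2 := by
    rw [hBdef, CStarRing.norm_star_mul_self, sq]
  have hrhs : ‖A‖ * Real.sqrt (2 * (vol k : ℝ) * Ω ((n : ℝ) - (k : ℝ)))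
      = Real.sqrt (2 * ε) := by
    rw [hεdef, hBnorm]
    rw [show (2 : ℝ) * ((vol k : ℝ) * ‖A‖ ^ 2 * Ω ((n : ℝ) - (k : ℝ)))
        = ‖A‖ ^ 2 * (2 * (vol k : ℝ) * Ω ((n : ℝ) - (k : ℝ))) from by ring]
    rw [Real.sqrt_mul (sq_nonneg _), Real.sqrt_sq (norm_nonneg _)]
  rw [hrhs]
  have h2ε : 0 ≤ 2 * ε := by linarith
  calc |a - b| = Real.sqrt (|a - b| ^ 2) := by
        rw [Real.sqrt_sq (abs_nonneg _)]
    _ ≤ Real.sqrt (2 * ε) := Real.sqrt_le_sqrt habs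
end

section
/- Let F, G : [0,∞) → [0,∞) be summable functions on the nonnegative integers, with G non-increasing. Then for any R ≥ 0: Σ_{k≥0} G(k) Σ_{n ≥ max(R−k−1, 0)} F(n) ≤ min( ‖G‖·‖F‖, G(0)·⌊R/2⌋·Σ_{n ≥ ⌊R/2⌋} F(n) + ‖F‖·Σ_{n ≥ ⌊R/2⌋} G(n) ), where ‖F‖ = Σ_{n≥0} F(n) and ‖G‖ = Σ_{n≥0} G(n). -/
/-- The tail sum `∑_{n ≥ m} F n` of a function on the nonnegative integers. -/
noncomputable def tailSum (F : ℕ → ℝ) (m : ℕ) : ℝ :=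
  ∑' n : ℕ, if m ≤ n then F n else 0

lemma tail_summable {F : ℕ → ℝ} (hF0 : ∀ n, 0 ≤ F n) (hFs : Summable F) (m : ℕ) :
    Summable (fun n => if m ≤ n then F n else 0) :=
  hFs.of_nonneg_of_le (fun n => by split <;> simp [hF0 n])
    (fun n => by split <;> simp [hF0 n])

lemma tailSum_nonneg {F : ℕ → ℝ} (hF0 : ∀ n, 0 ≤ F n) (m : ℕ) : 0 ≤ tailSum F m :=
  tsum_nonneg (fun n => by by_cases h : m ≤ n <;> simp [tailSum, h, hF0 n])

lemma tailSum_le_tsum {F : ℕ → ℝ} (hF0 : ∀ n, 0 ≤ F n) (hFs : Summable F) (m : ℕ) :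
    tailSum F m ≤ ∑' n, F n :=
  Summable.tsum_le_tsum (fun n => by split <;> simp [hF0 n]) (tail_summable hF0 hFs m) hFs

lemma tailSum_anti {F : ℕ → ℝ} (hF0 : ∀ n, 0 ≤ F n) (hFs : Summable F)
    {m m' : ℕ} (h : m ≤ m') : tailSum F m' ≤ tailSum F m := by
  refine Summable.tsum_le_tsum (fun n => ?_) (tail_summable hF0 hFs m') (tail_summable hF0 hFs m)
  by_cases hn : m' ≤ n
  · simp [hn, le_trans h hn]
  · simp only [if_neg hn]
    split <;> simp [hF0 n]

/-- **Lemma A.1**: a double-sum decay estimate.  For summable nonnegative `F`, `G`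
with `G` non-increasing and any `R ≥ 0`,
`∑_k G(k) ∑_{n ≥ |R−k−1|₊} F(n)
  ≤ min(‖G‖‖F‖, G(0)·⌊R/2⌋·∑_{n ≥ ⌊R/2⌋} F(n) + ‖F‖·∑_{n ≥ ⌊R/2⌋} G(n))`. -/
theorem double_sum_decay_estimate
    (F G : ℕ → ℝ) (hF0 : ∀ n, 0 ≤ F n) (hG0 : ∀ n, 0 ≤ G n)
    (hFs : Summable F) (hGs : Summable G)
    (hGanti : Antitone G) (R : ℕ) :
    ∑' k : ℕ, G k * tailSum F (R - k - 1) ≤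
      min ((∑' n : ℕ, G n) * (∑' n : ℕ, F n))
        (G 0 * ((R / 2 : ℕ) : ℝ) * tailSum F (R / 2) +
          (∑' n : ℕ, F n) * tailSum G (R / 2)) := by
  set N := R / 2 with hN
  have hFsum : (0:ℝ) ≤ ∑' n, F n := tsum_nonneg hF0
  set f : ℕ → ℝ := fun k => G k * tailSum F (R - k - 1) with hfdef
  have hf_nonneg : ∀ k, 0 ≤ f k := fun k =>
    mul_nonneg (hG0 k) (tailSum_nonneg hF0 _)
  have hf_le : ∀ k, f k ≤ G k * ∑' n, F n := fun k =>
    mul_le_mul_of_nonneg_left (tailSum_le_tsum hF0 hFs _) (hG0 k)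
  have hfs : Summable f := (hGs.mul_right _).of_nonneg_of_le hf_nonneg hf_le
  refine le_min ?_ ?_
  · calc ∑' k, f k ≤ ∑' k, G k * ∑' n, F n :=
          Summable.tsum_le_tsum hf_le hfs (hGs.mul_right _)
      _ = (∑' n, G n) * (∑' n, F n) := tsum_mul_right
  · -- split the sum at N
    have hsplit : ∀ k, f k = (if k < N then f k else 0) + (if N ≤ k then f k else 0) := by
      intro k; by_cases h : k < N
      · rw [if_pos h, if_neg (not_le.mpr h), add_zero]
      · rw [if_neg h, if_pos (not_lt.mp h), zero_add]
    have hs1 : Summable (fun k => if k < N then f k else 0) :=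
      hfs.of_nonneg_of_le (fun k => by split <;> simp [hf_nonneg k])
        (fun k => by split <;> simp [hf_nonneg k])
    have hs2 : Summable (fun k => if N ≤ k then f k else 0) :=
      hfs.of_nonneg_of_le (fun k => by split <;> simp [hf_nonneg k])
        (fun k => by split <;> simp [hf_nonneg k])
    have heq : ∑' k, f k =
        (∑' k, if k < N then f k else 0) + (∑' k, if N ≤ k then f k else 0) := by
      rw [← Summable.tsum_add hs1 hs2]
      exact tsum_congr hsplit
    rw [heq]
    have hpart1 : (∑' k, if k < N then f k else 0) ≤ G 0 * (N : ℝ) * tailSum F N := by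
      have hfin : (∑' k, if k < N then f k else 0) = ∑ k ∈ Finset.range N, f k := by
        rw [tsum_eq_sum (s := Finset.range N)
          (fun k hk => by simp [Finset.mem_range] at hk; simp [hk])]
        exact Finset.sum_congr rfl (fun k hk => by simp [Finset.mem_range] at hk; simp [hk])
      rw [hfin]
      have hterm : ∀ k ∈ Finset.range N, f k ≤ G 0 * tailSum F N := by
        intro k hk
        simp only [Finset.mem_range] at hk
        have h1 : G k ≤ G 0 := hGanti (Nat.zero_le k)
        have h2 : tailSum F (R - k - 1) ≤ tailSum F N := by
          refine tailSum_anti hF0 hFs ?_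
          omega
        exact mul_le_mul h1 h2 (tailSum_nonneg hF0 _) (hG0 0)
      calc ∑ k ∈ Finset.range N, f k ≤ ∑ _k ∈ Finset.range N, G 0 * tailSum F N :=
            Finset.sum_le_sum hterm
        _ = (N : ℝ) * (G 0 * tailSum F N) := by simp [mul_comm]
        _ = G 0 * (N : ℝ) * tailSum F N := by ring
    have hpart2 : (∑' k, if N ≤ k then f k else 0) ≤ (∑' n, F n) * tailSum G N := by
      have hbs : Summable (fun k => if N ≤ k then (∑' n, F n) * G k else 0) := by
        have := (tail_summable hG0 hGs N).mul_left (∑' n, F n)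
        refine this.congr (fun k => ?_)
        split <;> simp
      have hle : (∑' k, if N ≤ k then f k else 0) ≤
          ∑' k, if N ≤ k then (∑' n, F n) * G k else 0 := by
        refine Summable.tsum_le_tsum (fun k => ?_) hs2 hbs
        split
        · calc f k ≤ G k * ∑' n, F n := hf_le k
            _ = (∑' n, F n) * G k := mul_comm _ _
        · exact le_rfl
      refine hle.trans (le_of_eq ?_)
      rw [tailSum, ← tsum_mul_left]
      exact tsum_congr (fun k => by split <;> simp
      )
    exact add_le_add hpart1 hpart2
end

section
/- Let Γ be a countable set with algebra of quasi-local observables A_Γ, Λ_n ↑ Γ an increasing absorbing sequence of finite volumes, and H_n = H_n* ∈ A_{Λ_n} Hamiltonians such that δ(A) = lim_n [H_n, A] exists for all local A, defining a derivation δ. Set E_n = min spec(H_n) and suppose there are sequences ε_n → 0 and γ_n with limsup γ_n > 0 such that the spectral projection P_n of H_n − E_n onto [0, ε_n] satisfies (1 − P_n)(H_n − E_n) ≥ γ_n (1 − P_n). If ω is a state on A_Γ and Q_n ≤ P_n are nonzero orthogonal projections with ‖P_n A Q_n − ω(A) Q_n‖ → 0 for all local A, then ω is a ground state of δ (i.e.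 ω(A*δ(A)) ≥ 0 for all local A), and moreover ω(A*δ(A)) ≥ (limsup_n γ_n)·ω(A*A) for all local A with ω(A) = 0. -/
open Filter

set_option linter.unusedSectionVars false

section AuxGNS
variable {A : Type*} [NormedRing A] [StarRing A] [CStarRing A] [CompleteSpace A]
    [NormedAlgebra ℂ A] [StarModule ℂ A] [PartialOrder A] [StarOrderedRing A]

lemma auxGNS_neg_norm_le {x : A} (hx : IsSelfAdjoint x) : -((‖x‖ : ℂ) • (1 : A)) ≤ x := by
  letI : CStarAlgebra A :=
    { ‹NormedRing A›, ‹StarRing A›, ‹CStarRing A›, ‹CompleteSpace A›, ‹NormedAlgebra ℂ A›,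
      ‹StarModule ℂ A› with }
  have h := hx.neg_algebraMap_norm_le_self
  have heq : algebraMap ℝ A ‖x‖ = (‖x‖ : ℂ) • (1 : A) := by
    rw [Algebra.algebraMap_eq_smul_one]
    norm_num [← Complex.coe_smul]
  rwa [heq] at h

lemma auxGNS_smul_nonneg {s : ℝ} (hs : 0 ≤ s) {x : A} (hx : 0 ≤ x) : 0 ≤ (s : ℂ) • x := by
  have h := star_left_conjugate_nonneg hx ((Real.sqrt s : ℂ) • (1 : A))
  have heq : star ((Real.sqrt s : ℂ) • (1 : A)) * x * ((Real.sqrt s : ℂ) • (1 : A))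
      = (s : ℂ) • x := by
    rw [star_smul, star_one, Complex.star_def, Complex.conj_ofReal]
    rw [smul_mul_assoc, smul_mul_assoc, mul_smul_comm, one_mul, mul_one, smul_smul,
      ← Complex.ofReal_mul, Real.mul_self_sqrt hs]
  rwa [heq] at h

lemma auxGNS_scalar_nonneg {s : ℝ} {q : A} (hq : 0 ≤ q) (hqne : q ≠ 0)
    (h : 0 ≤ (s : ℂ) • q) : 0 ≤ s := by
  by_contra hneg
  push_neg at hneg
  have h2 : 0 ≤ ((-s⁻¹ : ℝ) : ℂ) • ((s : ℂ) • q) :=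
    auxGNS_smul_nonneg (neg_nonneg.mpr (inv_nonpos.mpr hneg.le)) h
  have h3 : ((-s⁻¹ : ℝ) : ℂ) • ((s : ℂ) • q) = -q := by
    rw [smul_smul, ← Complex.ofReal_mul]
    rw [show -s⁻¹ * s = -1 by rw [neg_mul, inv_mul_cancel₀ (ne_of_lt hneg)]]
    norm_num
  rw [h3] at h2
  exact hqne (le_antisymm (neg_nonneg.mp h2) hq)

lemma auxGNS_key {q : A} (hq0 : 0 ≤ q) (hqsa : IsSelfAdjoint q) (hqid : q * q = q)
    (hqne : q ≠ 0) {s : ℝ} {y m : A} (hmsa : IsSelfAdjoint m)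
    (heq : (s : ℂ) • q = y + m) (hy : 0 ≤ y) : -‖m‖ ≤ s := by
  have h1 : 0 ≤ (s : ℂ) • q + (‖m‖ : ℂ) • 1 := by
    rw [heq, add_assoc]
    refine add_nonneg hy ?_
    have h0 := auxGNS_neg_norm_le hmsa
    have h1 : (0:A) ≤ m - -((‖m‖ : ℂ) • 1) := sub_nonneg.mpr h0
    rwa [sub_neg_eq_add] at h1
  have h2 : 0 ≤ q * ((s : ℂ) • q + (‖m‖ : ℂ) • 1) * q := hqsa.conjugate_nonneg h1
  have h3 : q * ((s : ℂ) • q + (‖m‖ : ℂ) • 1) * q = ((s + ‖m‖ : ℝ) : ℂ) • q := by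
    rw [mul_add, add_mul, mul_smul_comm, mul_smul_comm, smul_mul_assoc, smul_mul_assoc,
      mul_one, hqid, hqid, Complex.ofReal_add, add_smul]
  rw [h3] at h2
  have := auxGNS_scalar_nonneg hq0 hqne h2
  linarith

lemma auxGNS_proj_norm_le_one {q : A} (hsa : IsSelfAdjoint q) (hid : q * q = q) : ‖q‖ ≤ 1 := by
  have h : ‖q‖ * ‖q‖ = ‖q‖ := by
    rw [← CStarRing.norm_star_mul_self, hsa.star_eq, hid]
  rcases eq_or_ne ‖q‖ 0 with h0 | h0
  · rw [h0]; norm_num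
  · have : ‖q‖ = 1 := by field_simp at h; nlinarith [norm_nonneg q]
    rw [this]

lemma auxGNS_proj_norm_eq_one {q : A} (hsa : IsSelfAdjoint q) (hid : q * q = q) (hne : q ≠ 0) :
    ‖q‖ = 1 := by
  have h : ‖q‖ * ‖q‖ = ‖q‖ := by
    rw [← CStarRing.norm_star_mul_self, hsa.star_eq, hid]
  have h0 : ‖q‖ ≠ 0 := by simpa using hne
  field_simp at h
  nlinarith [norm_nonneg q]

lemma auxGNS_norm_mul3_le (x y z : A) : ‖x * y * z‖ ≤ ‖x‖ * ‖y‖ * ‖z‖ :=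
  le_trans (norm_mul_le _ _) (mul_le_mul_of_nonneg_right (norm_mul_le x y) (norm_nonneg z))

lemma auxGNS_real_smul_sa {s : ℝ} {x : A} (hx : IsSelfAdjoint x) :
    IsSelfAdjoint ((s : ℂ) • x) := by
  rw [IsSelfAdjoint, star_smul, Complex.star_def, Complex.conj_ofReal, hx.star_eq]

end AuxGNS

set_option maxHeartbeats 1600000 in
/-- **Theorem 7.5** (spectral gap of the GNS Hamiltonian, abstract form).
`A` is a unital C*-algebra with an increasing family `L n` of (local) C*-subalgebras,
`H n ∈ L n` self-adjoint Hamiltonians with ground state energies `E n`, spectral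
projections `P n` of `H n − E n` onto `[0, ε n]` with `ε n → 0`, gap inequality
`(1 − P n)(H n − E n) ≥ γ n (1 − P n)` with `limsup γ n > 0`, and `δ` the derivation
`δ a = lim_n [H n, a]` on local elements.  If `ω` is a state and `Q n ≤ P n` are
nonzero orthogonal projections with `‖P n · a · Q n − ω(a) Q n‖ → 0` for all local `a`,
then `ω` is a ground state of `δ` and satisfies the gap inequality
`ω(a* δ(a)) ≥ (limsup γ) ω(a* a)` for local `a` with `ω a = 0`. -/
theorem gns_gap_in_thermodynamic_limit
    {A : Type*} [NormedRing A] [StarRing A] [CStarRing A] [CompleteSpace A]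
    [NormedAlgebra ℂ A] [StarModule ℂ A] [PartialOrder A] [StarOrderedRing A]
    (L : ℕ → StarSubalgebra ℂ A) (hL : Monotone L)
    (H P Q : ℕ → A) (E γ ε : ℕ → ℝ)
    (hHloc : ∀ n, H n ∈ L n) (hHsa : ∀ n, IsSelfAdjoint (H n))
    (hE : ∀ n, 0 ≤ H n - (E n : ℂ) • (1 : A))
    (hε0 : ∀ n, 0 ≤ ε n) (hε : Tendsto ε atTop (nhds 0))
    (hγ0 : ∀ n, 0 ≤ γ n) (hγbdd : BddAbove (Set.range γ))
    (hγ : 0 < limsup γ atTop)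
    (hPsa : ∀ n, IsSelfAdjoint (P n)) (hPidem : ∀ n, P n * P n = P n)
    (hPloc : ∀ n, P n ∈ L n) (hPcomm : ∀ n, Commute (H n) (P n))
    (hPspec : ∀ n, ‖(H n - (E n : ℂ) • (1 : A)) * P n‖ ≤ ε n)
    (hgap : ∀ n, (γ n : ℂ) • ((1 : A) - P n) ≤
      ((1 : A) - P n) * (H n - (E n : ℂ) • (1 : A)))
    (δ : A → A)
    (hδ : ∀ a : A, (∃ n, a ∈ L n) →
      Tendsto (fun n => H n * a - a * H n) atTop (nhds (δ a)))
    (ω : A →L[ℂ] ℂ) (hω1 : ω 1 = 1)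
    (hωpos : ∀ a : A, 0 ≤ (ω (star a * a)).re ∧ (ω (star a * a)).im = 0)
    (hQsa : ∀ n, IsSelfAdjoint (Q n)) (hQidem : ∀ n, Q n * Q n = Q n)
    (hQne : ∀ n, Q n ≠ 0) (hQloc : ∀ n, Q n ∈ L n)
    (hQP : ∀ n, Q n * P n = Q n ∧ P n * Q n = Q n)
    (hconv : ∀ a : A, (∃ n, a ∈ L n) →
      Tendsto (fun n => ‖P n * a * Q n - ω a • Q n‖) atTop (nhds 0)) :
    (∀ a : A, (∃ n, a ∈ L n) →
        0 ≤ (ω (star a * δ a)).re ∧ (ω (star a * δ a)).im = 0) ∧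
      (∀ a : A, (∃ n, a ∈ L n) → ω a = 0 →
        (limsup γ atTop) * (ω (star a * a)).re ≤ (ω (star a * δ a)).re) := by
  classical
  set K : ℕ → A := fun n => H n - (E n : ℂ) • (1 : A) with hKdef
  have hKsa : ∀ n, IsSelfAdjoint (K n) := fun n =>
    (hHsa n).sub (auxGNS_real_smul_sa (IsSelfAdjoint.one A))
  have hQ0 : ∀ n, 0 ≤ Q n := fun n => by
    have h := star_mul_self_nonneg (Q n)
    rwa [(hQsa n).star_eq, hQidem n] at h
  have hQnorm : ∀ n, ‖Q n‖ = 1 := fun n =>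
    auxGNS_proj_norm_eq_one (hQsa n) (hQidem n) (hQne n)
  have hPnorm : ∀ n, ‖P n‖ ≤ 1 := fun n => auxGNS_proj_norm_le_one (hPsa n) (hPidem n)
  have hRsa : ∀ n, IsSelfAdjoint ((1 : A) - P n) := fun n => (IsSelfAdjoint.one A).sub (hPsa n)
  have hRidem : ∀ n, ((1 : A) - P n) * ((1 : A) - P n) = (1 : A) - P n := fun n => by
    rw [sub_mul, one_mul, mul_sub, mul_one, hPidem, sub_self, sub_zero]
  have hRnorm : ∀ n, ‖(1 : A) - P n‖ ≤ 1 := fun n =>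
    auxGNS_proj_norm_le_one (hRsa n) (hRidem n)
  have hKP : ∀ n, K n * P n = P n * K n := fun n => by
    simp only [hKdef, sub_mul, mul_sub, smul_mul_assoc, mul_smul_comm, one_mul, mul_one]
    rw [(hPcomm n).eq]
  have hKcommut : ∀ n (b : A), K n * b - b * K n = H n * b - b * H n := fun n b => by
    simp only [hKdef, sub_mul, mul_sub, smul_mul_assoc, mul_smul_comm, one_mul, mul_one]
    abel
  have haQ : ∀ (a : A) n, ‖a * Q n‖ ≤ ‖a‖ := fun a n => by
    calc ‖a * Q n‖ ≤ ‖a‖ * ‖Q n‖ := norm_mul_le _ _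
      _ = ‖a‖ := by rw [hQnorm n, mul_one]
  -- convergence of Q b Q to ω(b) Q for local b
  have hQQ : ∀ b : A, (∃ k, b ∈ L k) →
      Tendsto (fun n => ‖Q n * b * Q n - ω b • Q n‖) atTop (nhds 0) := by
    intro b hb
    refine squeeze_zero (fun n => norm_nonneg _) (fun n => ?_) (hconv b hb)
    have heq : Q n * b * Q n - ω b • Q n = Q n * (P n * b * Q n - ω b • Q n) := by
      simp only [mul_sub, mul_smul_comm, ← mul_assoc, (hQP n).1, hQidem n]
    rw [heq]
    calc ‖Q n * (P n * b * Q n - ω b • Q n)‖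
        ≤ ‖Q n‖ * ‖P n * b * Q n - ω b • Q n‖ := norm_mul_le _ _
      _ = ‖P n * b * Q n - ω b • Q n‖ := by rw [hQnorm n, one_mul]
  have hζ : ∀ b : A, (∃ k, b ∈ L k) →
      Tendsto (fun n => ‖H n * b - b * H n - δ b‖) atTop (nhds 0) := fun b hb => by
    have h := hδ b hb
    rwa [tendsto_iff_norm_sub_tendsto_zero] at h
  -- convergence of Q (a* δ a) Q to ω(a* δ a) Q
  have hQδQ : ∀ a : A, (∃ k, a ∈ L k) →
      Tendsto (fun n => ‖Q n * (star a * δ a) * Q n - ω (star a * δ a) • Q n‖)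
        atTop (nhds 0) := by
    rintro a ⟨n₀, ha⟩
    rw [Metric.tendsto_atTop]
    intro ep hep
    have hCpos : (0 : ℝ) < ‖ω‖ + 2 := by positivity
    have h2 : Tendsto (fun m => ‖star a * δ a - star a * (H m * a - a * H m)‖)
        atTop (nhds 0) := by
      have h2' : Tendsto (fun m => star a * (H m * a - a * H m)) atTop
          (nhds (star a * δ a)) := (hδ a ⟨n₀, ha⟩).const_mul (star a)
      rw [tendsto_iff_norm_sub_tendsto_zero] at h2'
      simpa [norm_sub_rev] using h2'
    obtain ⟨m, hm⟩ :=
      (h2.eventually (gt_mem_nhds (show (0:ℝ) < ep / (‖ω‖ + 2) by positivity))).exists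
    set y := star a * (H m * a - a * H m) with hy
    have hyloc : ∃ k, y ∈ L k := by
      refine ⟨max n₀ m, mul_mem (star_mem (hL (le_max_left n₀ m) ha))
        (sub_mem (mul_mem (hL (le_max_right n₀ m) (hHloc m)) (hL (le_max_left n₀ m) ha))
          (mul_mem (hL (le_max_left n₀ m) ha) (hL (le_max_right n₀ m) (hHloc m))))⟩
    obtain ⟨N, hN⟩ := Metric.tendsto_atTop.mp (hQQ y hyloc) (ep / (‖ω‖ + 2)) (by positivity)
    refine ⟨N, fun n hn => ?_⟩
    have h3 := hN n hn
    rw [Real.dist_eq, sub_zero, abs_of_nonneg (norm_nonneg _)] at h3 ⊢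
    have hdec : Q n * (star a * δ a) * Q n - ω (star a * δ a) • Q n
        = Q n * (star a * δ a - y) * Q n + (Q n * y * Q n - ω y • Q n)
          + (ω y - ω (star a * δ a)) • Q n := by
      simp only [mul_sub, sub_mul, sub_smul]
      abel
    have hb1 : ‖Q n * (star a * δ a - y) * Q n‖ ≤ ‖star a * δ a - y‖ := by
      calc ‖Q n * (star a * δ a - y) * Q n‖
          ≤ ‖Q n‖ * ‖star a * δ a - y‖ * ‖Q n‖ := auxGNS_norm_mul3_le _ _ _
        _ = ‖star a * δ a - y‖ := by rw [hQnorm n]; ring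
    have hb3 : ‖(ω y - ω (star a * δ a)) • Q n‖ ≤ ‖ω‖ * ‖star a * δ a - y‖ := by
      rw [norm_smul, hQnorm n, mul_one]
      calc ‖ω y - ω (star a * δ a)‖ = ‖ω (y - star a * δ a)‖ := by rw [map_sub]
        _ ≤ ‖ω‖ * ‖y - star a * δ a‖ := ω.le_opNorm _
        _ = ‖ω‖ * ‖star a * δ a - y‖ := by rw [norm_sub_rev]
    have htri : ‖Q n * (star a * δ a) * Q n - ω (star a * δ a) • Q n‖
        ≤ ‖Q n * (star a * δ a - y) * Q n‖ + ‖Q n * y * Q n - ω y • Q n‖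
          + ‖(ω y - ω (star a * δ a)) • Q n‖ := by
      rw [hdec]
      exact le_trans (norm_add_le _ _) (add_le_add_left (norm_add_le _ _) _)
    have hcancel : ep / (‖ω‖ + 2) * (‖ω‖ + 2) = ep := div_mul_cancel₀ ep (ne_of_gt hCpos)
    have hω0 : (0:ℝ) ≤ ‖ω‖ := norm_nonneg ω
    nlinarith [hb1, hb3, hm, h3, htri,
      mul_le_mul_of_nonneg_left hm.le hω0]
  -- the key approximation: ω(a* δ a) • Q n  ≈  star (a Q n) K n (a Q n)
  have hMten : ∀ a : A, (∃ k, a ∈ L k) →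
      Tendsto (fun n => ‖ω (star a * δ a) • Q n - star (a * Q n) * K n * (a * Q n)‖)
        atTop (nhds 0) := by
    rintro a ⟨n₀, ha⟩
    have hb : Tendsto (fun n => ‖Q n * (star a * δ a) * Q n - ω (star a * δ a) • Q n‖
        + ‖a‖ * ‖H n * a - a * H n - δ a‖ + ‖a‖ ^ 2 * ε n) atTop (nhds 0) := by
      have h1 := hQδQ a ⟨n₀, ha⟩
      have h2 := (hζ a ⟨n₀, ha⟩).const_mul ‖a‖
      have h3 := hε.const_mul (‖a‖ ^ 2)
      simpa using (h1.add h2).add h3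
    refine squeeze_zero (fun n => norm_nonneg _) (fun n => ?_) hb
    have hSWT : star (a * Q n) * K n * (a * Q n)
        = Q n * (star a * (H n * a - a * H n)) * Q n
          + Q n * (star a * a) * ((K n * P n) * Q n) := by
      rw [star_mul, (hQsa n).star_eq, ← hKcommut n a, mul_assoc (K n) (P n) (Q n), (hQP n).2]
      simp only [mul_sub, sub_mul, mul_add, add_mul, mul_assoc]
      abel
    have hdec : ω (star a * δ a) • Q n - star (a * Q n) * K n * (a * Q n)
        = (ω (star a * δ a) • Q n - Q n * (star a * δ a) * Q n)
          + (Q n * (star a * δ a) * Q n - Q n * (star a * (H n * a - a * H n)) * Q n)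
          - Q n * (star a * a) * ((K n * P n) * Q n) := by
      rw [hSWT]; abel
    have hb1 : ‖ω (star a * δ a) • Q n - Q n * (star a * δ a) * Q n‖
        = ‖Q n * (star a * δ a) * Q n - ω (star a * δ a) • Q n‖ := norm_sub_rev _ _
    have hb2 : ‖Q n * (star a * δ a) * Q n - Q n * (star a * (H n * a - a * H n)) * Q n‖
        ≤ ‖a‖ * ‖H n * a - a * H n - δ a‖ := by
      have he : Q n * (star a * δ a) * Q n - Q n * (star a * (H n * a - a * H n)) * Q n
          = Q n * (star a * (δ a - (H n * a - a * H n))) * Q n := by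
        simp only [mul_sub, sub_mul]
      rw [he]
      calc ‖Q n * (star a * (δ a - (H n * a - a * H n))) * Q n‖
          ≤ ‖Q n‖ * ‖star a * (δ a - (H n * a - a * H n))‖ * ‖Q n‖ :=
            auxGNS_norm_mul3_le _ _ _
        _ = ‖star a * (δ a - (H n * a - a * H n))‖ := by rw [hQnorm n]; ring
        _ ≤ ‖star a‖ * ‖δ a - (H n * a - a * H n)‖ := norm_mul_le _ _
        _ = ‖a‖ * ‖H n * a - a * H n - δ a‖ := by rw [norm_star, norm_sub_rev]
    have hb3 : ‖Q n * (star a * a) * ((K n * P n) * Q n)‖ ≤ ‖a‖ ^ 2 * ε n := by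
      calc ‖Q n * (star a * a) * ((K n * P n) * Q n)‖
          ≤ ‖Q n‖ * ‖star a * a‖ * ‖(K n * P n) * Q n‖ := auxGNS_norm_mul3_le _ _ _
        _ ≤ ‖Q n‖ * ‖star a * a‖ * (‖K n * P n‖ * ‖Q n‖) := by
            gcongr; exact norm_mul_le _ _
        _ = ‖star a * a‖ * ‖K n * P n‖ := by rw [hQnorm n]; ring
        _ ≤ (‖a‖ * ‖a‖) * ε n := by
            refine mul_le_mul ?_ (hPspec n) (norm_nonneg _) (by positivity)
            calc ‖star a * a‖ ≤ ‖star a‖ * ‖a‖ := norm_mul_le _ _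
              _ = ‖a‖ * ‖a‖ := by rw [norm_star]
        _ = ‖a‖ ^ 2 * ε n := by ring
    calc ‖ω (star a * δ a) • Q n - star (a * Q n) * K n * (a * Q n)‖
        ≤ ‖(ω (star a * δ a) • Q n - Q n * (star a * δ a) * Q n)
            + (Q n * (star a * δ a) * Q n - Q n * (star a * (H n * a - a * H n)) * Q n)‖
          + ‖Q n * (star a * a) * ((K n * P n) * Q n)‖ := by rw [hdec]; exact norm_sub_le _ _
      _ ≤ ‖ω (star a * δ a) • Q n - Q n * (star a * δ a) * Q n‖
          + ‖Q n * (star a * δ a) * Q n - Q n * (star a * (H n * a - a * H n)) * Q n‖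
          + ‖Q n * (star a * a) * ((K n * P n) * Q n)‖ := by
        gcongr; exact norm_add_le _ _
      _ ≤ ‖Q n * (star a * δ a) * Q n - ω (star a * δ a) • Q n‖
          + ‖a‖ * ‖H n * a - a * H n - δ a‖ + ‖a‖ ^ 2 * ε n := by
        rw [hb1]; gcongr
  -- Part 1
  have part1 : ∀ a : A, (∃ k, a ∈ L k) →
      0 ≤ (ω (star a * δ a)).re ∧ (ω (star a * δ a)).im = 0 := by
    intro a ha
    set d := ω (star a * δ a) with hd
    have hSnn : ∀ n, 0 ≤ star (a * Q n) * K n * (a * Q n) := fun n =>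
      star_left_conjugate_nonneg (hE n) (a * Q n)
    have hSsa : ∀ n, IsSelfAdjoint (star (a * Q n) * K n * (a * Q n)) := fun n =>
      IsSelfAdjoint.of_nonneg (hSnn n)
    have hMnorm := hMten a ha
    have hIm : d.im = 0 := by
      have key : ∀ n, 2 * |d.im| ≤
          2 * ‖d • Q n - star (a * Q n) * K n * (a * Q n)‖ := by
        intro n
        set m := d • Q n - star (a * Q n) * K n * (a * Q n) with hm
        have h1 : (d - (starRingEnd ℂ) d) • Q n = m - star m := by
          rw [hm, star_sub, star_smul, (hQsa n).star_eq, (hSsa n).star_eq, sub_smul]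
          abel
        have h2 : ‖(d - (starRingEnd ℂ) d) • Q n‖ = 2 * |d.im| := by
          rw [norm_smul, hQnorm n, mul_one, Complex.sub_conj]
          simp [abs_mul]
        have h3 : ‖m - star m‖ ≤ 2 * ‖m‖ := by
          calc ‖m - star m‖ ≤ ‖m‖ + ‖star m‖ := norm_sub_le _ _
            _ = 2 * ‖m‖ := by rw [norm_star]; ring
        rw [← h2, h1]; exact h3
      have h0 : Tendsto (fun n => 2 * ‖d • Q n - star (a * Q n) * K n * (a * Q n)‖)
          atTop (nhds 0) := by simpa using hMnorm.const_mul 2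
      have h4 : 2 * |d.im| ≤ 0 := ge_of_tendsto' h0 key
      have h5 : |d.im| ≤ 0 := by linarith
      exact abs_nonpos_iff.mp h5
    have hRe : 0 ≤ d.re := by
      have key : ∀ n,
          -(2 * ‖d • Q n - star (a * Q n) * K n * (a * Q n)‖) ≤ 2 * d.re := by
        intro n
        set m := d • Q n - star (a * Q n) * K n * (a * Q n) with hm
        have hmsa : IsSelfAdjoint (m + star m) := IsSelfAdjoint.add_star_self m
        have heq : ((2 * d.re : ℝ) : ℂ) • Q n
            = (star (a * Q n) * K n * (a * Q n) + star (a * Q n) * K n * (a * Q n))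
              + (m + star m) := by
          rw [show ((2 * d.re : ℝ) : ℂ) = d + (starRingEnd ℂ) d from (Complex.add_conj d).symm,
            add_smul, hm, star_sub, star_smul, (hQsa n).star_eq, (hSsa n).star_eq]
          abel
        have hk := auxGNS_key (hQ0 n) (hQsa n) (hQidem n) (hQne n) hmsa heq
          (add_nonneg (hSnn n) (hSnn n))
        have hnm : ‖m + star m‖ ≤ 2 * ‖m‖ := by
          calc ‖m + star m‖ ≤ ‖m‖ + ‖star m‖ := norm_add_le _ _
            _ = 2 * ‖m‖ := by rw [norm_star]; ring
        linarith
      have h0 : Tendsto (fun n => -(2 * ‖d • Q n - star (a * Q n) * K n * (a * Q n)‖))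
          atTop (nhds 0) := by simpa using (hMnorm.const_mul 2).neg
      have h4 : (0:ℝ) ≤ 2 * d.re := le_of_tendsto' h0 key
      linarith
    exact ⟨hRe, hIm⟩
  refine ⟨part1, ?_⟩
  rintro a ha hωa
  obtain ⟨n₀, ha'⟩ := ha
  obtain ⟨hre, him⟩ := part1 a ⟨n₀, ha'⟩
  set t := (ω (star a * a)).re with ht
  set r := (ω (star a * δ a)).re with hr
  have ht0 : 0 ≤ t := (hωpos a).1
  have hωaa : ω (star a * a) = (t : ℂ) := Complex.ext (by simp [ht]) (by simp [(hωpos a).2])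
  have hdr : ω (star a * δ a) = (r : ℂ) := Complex.ext (by simp [hr]) (by simp [him])
  rcases eq_or_lt_of_le ht0 with hteq | htpos
  · rw [← hteq, mul_zero]; exact hre
  -- sequences
  have hαten : Tendsto (fun n => ‖P n * (a * Q n)‖) atTop (nhds 0) := by
    have h := hconv a ⟨n₀, ha'⟩
    simpa [hωa, mul_assoc] using h
  have hβten := hQQ (star a * a) ⟨n₀, mul_mem (star_mem ha') ha'⟩
  have hMnorm : Tendsto (fun n => ‖(r : ℂ) • Q n - star (a * Q n) * K n * (a * Q n)‖)
      atTop (nhds 0) := by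
    have h := hMten a ⟨n₀, ha'⟩
    rw [hdr] at h
    exact h
  obtain ⟨C, hC⟩ := hγbdd
  have hγC : ∀ n, γ n ≤ C := fun n => hC ⟨n, rfl⟩
  have hC0 : (0:ℝ) ≤ C := le_trans (hγ0 0) (hγC 0)
  -- per-n norm bounds of error terms
  have hM2b : ∀ n, ‖star (a * Q n) * K n * (a * Q n)
      - star (((1:A) - P n) * (a * Q n)) * K n * (((1:A) - P n) * (a * Q n))‖
      ≤ 2 * ‖a‖ ^ 2 * ε n := by
    intro n
    set c := ((1:A) - P n) * (a * Q n) with hc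
    set p := P n * (a * Q n) with hp
    have hsplit : a * Q n = c + p := by
      rw [hc, hp, ← add_mul]
      rw [sub_add_cancel, one_mul]
    have hcnorm : ‖c‖ ≤ ‖a‖ := by
      calc ‖c‖ ≤ ‖(1:A) - P n‖ * ‖a * Q n‖ := norm_mul_le _ _
        _ ≤ 1 * ‖a‖ := mul_le_mul (hRnorm n) (haQ a n) (norm_nonneg _) zero_le_one
        _ = ‖a‖ := one_mul _
    have hKp : K n * p = (K n * P n) * (a * Q n) := by rw [hp, mul_assoc]
    have hKpnorm : ‖K n * p‖ ≤ ε n * ‖a‖ := by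
      rw [hKp]
      calc ‖(K n * P n) * (a * Q n)‖ ≤ ‖K n * P n‖ * ‖a * Q n‖ := norm_mul_le _ _
        _ ≤ ε n * ‖a‖ := mul_le_mul (hPspec n) (haQ a n) (norm_nonneg _) (hε0 n)
    have hM2eq : star (a * Q n) * K n * (a * Q n) - star c * K n * c
        = star c * (K n * p) + star (K n * p) * (a * Q n) := by
      have hKpstar : star (K n * p) = star p * K n := by
        rw [star_mul, (hKsa n).star_eq]
      rw [hKpstar, hsplit]
      simp only [star_add, add_mul, mul_add, mul_assoc]
      abel
    rw [hM2eq]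
    calc ‖star c * (K n * p) + star (K n * p) * (a * Q n)‖
        ≤ ‖star c * (K n * p)‖ + ‖star (K n * p) * (a * Q n)‖ := norm_add_le _ _
      _ ≤ ‖star c‖ * ‖K n * p‖ + ‖star (K n * p)‖ * ‖a * Q n‖ :=
          add_le_add (norm_mul_le _ _) (norm_mul_le _ _)
      _ ≤ ‖a‖ * (ε n * ‖a‖) + (ε n * ‖a‖) * ‖a‖ := by
          rw [norm_star, norm_star]
          exact add_le_add (mul_le_mul hcnorm hKpnorm (norm_nonneg _) (norm_nonneg _))
            (mul_le_mul hKpnorm (haQ a n) (norm_nonneg _) (mul_nonneg (hε0 n) (norm_nonneg a)))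
      _ = 2 * ‖a‖ ^ 2 * ε n := by ring
  have hM3b : ∀ n, ‖star (((1:A) - P n) * (a * Q n)) * (((1:A) - P n) * (a * Q n))
      - (t : ℂ) • Q n‖
      ≤ ‖Q n * (star a * a) * Q n - ω (star a * a) • Q n‖ + 3 * (‖a‖ * ‖P n * (a * Q n)‖) := by
    intro n
    set c := ((1:A) - P n) * (a * Q n) with hc
    set p := P n * (a * Q n) with hp
    have hsplit2 : c = a * Q n - p := by rw [hc, hp, sub_mul, one_mul]
    have hpnorm : ‖p‖ ≤ ‖a‖ := by
      calc ‖p‖ ≤ ‖P n‖ * ‖a * Q n‖ := norm_mul_le _ _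
        _ ≤ 1 * ‖a‖ := mul_le_mul (hPnorm n) (haQ a n) (norm_nonneg _) zero_le_one
        _ = ‖a‖ := one_mul _
    have he1 : star (a * Q n) * (a * Q n) = Q n * (star a * a) * Q n := by
      rw [star_mul, (hQsa n).star_eq]
      simp only [mul_assoc]
    have hdec : star c * c - (t : ℂ) • Q n
        = (Q n * (star a * a) * Q n - ω (star a * a) • Q n)
          - star (a * Q n) * p - star p * (a * Q n) + star p * p := by
      rw [hsplit2, hωaa]
      simp only [star_sub, sub_mul, mul_sub, he1]
      abel
    rw [hdec]
    have n1 : ‖star (a * Q n) * p‖ ≤ ‖a‖ * ‖p‖ := by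
      calc ‖star (a * Q n) * p‖ ≤ ‖star (a * Q n)‖ * ‖p‖ := norm_mul_le _ _
        _ ≤ ‖a‖ * ‖p‖ := by rw [norm_star]; exact mul_le_mul_of_nonneg_right (haQ a n) (norm_nonneg _)
    have n2 : ‖star p * (a * Q n)‖ ≤ ‖p‖ * ‖a‖ := by
      calc ‖star p * (a * Q n)‖ ≤ ‖star p‖ * ‖a * Q n‖ := norm_mul_le _ _
        _ ≤ ‖p‖ * ‖a‖ := by rw [norm_star]; exact mul_le_mul_of_nonneg_left (haQ a n) (norm_nonneg _)
    have n3 : ‖star p * p‖ ≤ ‖a‖ * ‖p‖ := by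
      calc ‖star p * p‖ ≤ ‖star p‖ * ‖p‖ := norm_mul_le _ _
        _ ≤ ‖a‖ * ‖p‖ := by rw [norm_star]; exact mul_le_mul_of_nonneg_right hpnorm (norm_nonneg _)
    calc ‖Q n * (star a * a) * Q n - ω (star a * a) • Q n
          - star (a * Q n) * p - star p * (a * Q n) + star p * p‖
        ≤ ‖Q n * (star a * a) * Q n - ω (star a * a) • Q n - star (a * Q n) * p
            - star p * (a * Q n)‖ + ‖star p * p‖ := norm_add_le _ _
      _ ≤ ‖Q n * (star a * a) * Q n - ω (star a * a) • Q n - star (a * Q n) * p‖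
            + ‖star p * (a * Q n)‖ + ‖star p * p‖ := by gcongr; exact norm_sub_le _ _
      _ ≤ ‖Q n * (star a * a) * Q n - ω (star a * a) • Q n‖ + ‖star (a * Q n) * p‖
            + ‖star p * (a * Q n)‖ + ‖star p * p‖ := by gcongr; exact norm_sub_le _ _
      _ ≤ ‖Q n * (star a * a) * Q n - ω (star a * a) • Q n‖ + ‖a‖ * ‖p‖
            + ‖p‖ * ‖a‖ + ‖a‖ * ‖p‖ := by gcongr
      _ = ‖Q n * (star a * a) * Q n - ω (star a * a) • Q n‖ + 3 * (‖a‖ * ‖p‖) := by ring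
  -- gap inequality, conjugated
  have hgapc : ∀ n, (γ n : ℂ) • (star (((1:A) - P n) * (a * Q n)) * (((1:A) - P n) * (a * Q n)))
      ≤ star (((1:A) - P n) * (a * Q n)) * K n * (((1:A) - P n) * (a * Q n)) := by
    intro n
    have h := star_left_conjugate_le_conjugate (hgap n) (a * Q n)
    have e1 : star (a * Q n) * ((γ n : ℂ) • ((1:A) - P n)) * (a * Q n)
        = (γ n : ℂ) • (star (((1:A) - P n) * (a * Q n)) * (((1:A) - P n) * (a * Q n))) := by
      rw [mul_smul_comm, smul_mul_assoc]
      congr 1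
      rw [star_mul ((1:A) - P n) (a * Q n), (hRsa n).star_eq]
      simp only [mul_assoc]
      rw [show ((1:A) - P n) * (((1:A) - P n) * (a * Q n)) = ((1:A) - P n) * (a * Q n) by
        rw [← mul_assoc, hRidem n]]
    have e2 : star (a * Q n) * (((1:A) - P n) * K n) * (a * Q n)
        = star (((1:A) - P n) * (a * Q n)) * K n * (((1:A) - P n) * (a * Q n)) := by
      rw [star_mul ((1:A) - P n) (a * Q n), (hRsa n).star_eq]
      have hRKR : ∀ x : A, ((1:A) - P n) * (K n * (((1:A) - P n) * x))
          = ((1:A) - P n) * (K n * x) := by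
        intro x
        have h0 : ((1:A) - P n) * K n * ((1:A) - P n) = ((1:A) - P n) * K n := by
          rw [mul_sub, mul_one, mul_assoc, hKP n, ← mul_assoc]
          rw [show ((1:A) - P n) * P n = 0 by rw [sub_mul, one_mul, hPidem n, sub_self]]
          rw [zero_mul, sub_zero]
        calc ((1:A) - P n) * (K n * (((1:A) - P n) * x))
            = (((1:A) - P n) * K n * ((1:A) - P n)) * x := by simp only [mul_assoc]
          _ = (((1:A) - P n) * K n) * x := by rw [h0]
          _ = ((1:A) - P n) * (K n * x) := by rw [mul_assoc]
      simp only [mul_assoc]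
      rw [hRKR (a * Q n)]
    rw [e1, e2] at h
    exact h
  -- per-n key inequality via auxGNS_key
  have hkey : ∀ n, γ n * t ≤ r +
      ‖((r : ℂ) • Q n - star (a * Q n) * K n * (a * Q n))
        + (star (a * Q n) * K n * (a * Q n)
            - star (((1:A) - P n) * (a * Q n)) * K n * (((1:A) - P n) * (a * Q n)))
        + (γ n : ℂ) • (star (((1:A) - P n) * (a * Q n)) * (((1:A) - P n) * (a * Q n))
            - (t : ℂ) • Q n)‖ := by
    intro n
    set c := ((1:A) - P n) * (a * Q n) with hc
    have hSsa : IsSelfAdjoint (star (a * Q n) * K n * (a * Q n)) :=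
      IsSelfAdjoint.of_nonneg (star_left_conjugate_nonneg (hE n) (a * Q n))
    have hScsa : IsSelfAdjoint (star c * K n * c) :=
      IsSelfAdjoint.of_nonneg (star_left_conjugate_nonneg (hE n) c)
    have hccsa : IsSelfAdjoint (star c * c) :=
      IsSelfAdjoint.of_nonneg (star_mul_self_nonneg c)
    have hmsa : IsSelfAdjoint (((r : ℂ) • Q n - star (a * Q n) * K n * (a * Q n))
        + (star (a * Q n) * K n * (a * Q n) - star c * K n * c)
        + (γ n : ℂ) • (star c * c - (t : ℂ) • Q n)) := by
      refine IsSelfAdjoint.add (IsSelfAdjoint.add ?_ ?_) ?_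
      · exact (auxGNS_real_smul_sa (hQsa n)).sub hSsa
      · exact hSsa.sub hScsa
      · exact auxGNS_real_smul_sa (hccsa.sub (auxGNS_real_smul_sa (hQsa n)))
    have heq : ((r - γ n * t : ℝ) : ℂ) • Q n
        = (star c * K n * c - (γ n : ℂ) • (star c * c))
          + (((r : ℂ) • Q n - star (a * Q n) * K n * (a * Q n))
            + (star (a * Q n) * K n * (a * Q n) - star c * K n * c)
            + (γ n : ℂ) • (star c * c - (t : ℂ) • Q n)) := by
      push_cast
      module
    have hy : 0 ≤ star c * K n * c - (γ n : ℂ) • (star c * c) :=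
      sub_nonneg.mpr (hgapc n)
    have hk := auxGNS_key (hQ0 n) (hQsa n) (hQidem n) (hQne n) hmsa heq hy
    linarith
  -- the error norm tends to zero
  have hκten : Tendsto (fun n =>
      ‖((r : ℂ) • Q n - star (a * Q n) * K n * (a * Q n))
        + (star (a * Q n) * K n * (a * Q n)
            - star (((1:A) - P n) * (a * Q n)) * K n * (((1:A) - P n) * (a * Q n)))
        + (γ n : ℂ) • (star (((1:A) - P n) * (a * Q n)) * (((1:A) - P n) * (a * Q n))
            - (t : ℂ) • Q n)‖) atTop (nhds 0) := by
    have hbten : Tendsto (fun n =>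
        ‖(r : ℂ) • Q n - star (a * Q n) * K n * (a * Q n)‖
        + 2 * ‖a‖ ^ 2 * ε n
        + C * (‖Q n * (star a * a) * Q n - ω (star a * a) • Q n‖
            + 3 * (‖a‖ * ‖P n * (a * Q n)‖))) atTop (nhds 0) := by
      have h2 := hε.const_mul (2 * ‖a‖ ^ 2)
      have h3 := (hβten.add ((hαten.const_mul ‖a‖).const_mul 3)).const_mul C
      have := (hMnorm.add h2).add h3
      simpa [mul_comm, mul_assoc, mul_left_comm] using this
    refine squeeze_zero (fun n => norm_nonneg _) (fun n => ?_) hbten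
    have hs : ‖(γ n : ℂ) • (star (((1:A) - P n) * (a * Q n)) * (((1:A) - P n) * (a * Q n))
        - (t : ℂ) • Q n)‖
        ≤ C * (‖Q n * (star a * a) * Q n - ω (star a * a) • Q n‖
            + 3 * (‖a‖ * ‖P n * (a * Q n)‖)) := by
      rw [norm_smul]
      have : ‖(γ n : ℂ)‖ = γ n := by
        rw [Complex.norm_real, Real.norm_eq_abs, abs_of_nonneg (hγ0 n)]
      rw [this]
      exact mul_le_mul (hγC n) (hM3b n) (norm_nonneg _) hC0
    calc ‖_ + _ + _‖ ≤ ‖_ + _‖ + ‖_‖ := norm_add_le _ _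
      _ ≤ ‖(r : ℂ) • Q n - star (a * Q n) * K n * (a * Q n)‖
          + ‖star (a * Q n) * K n * (a * Q n)
            - star (((1:A) - P n) * (a * Q n)) * K n * (((1:A) - P n) * (a * Q n))‖
          + ‖(γ n : ℂ) • (star (((1:A) - P n) * (a * Q n)) * (((1:A) - P n) * (a * Q n))
            - (t : ℂ) • Q n)‖ := by gcongr; exact norm_add_le _ _
      _ ≤ ‖(r : ℂ) • Q n - star (a * Q n) * K n * (a * Q n)‖
          + 2 * ‖a‖ ^ 2 * ε n
          + C * (‖Q n * (star a * a) * Q n - ω (star a * a) • Q n‖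
            + 3 * (‖a‖ * ‖P n * (a * Q n)‖)) := by
        exact add_le_add (add_le_add le_rfl (hM2b n)) hs
  -- conclude with limsup
  have hcb : IsCoboundedUnder (· ≤ ·) atTop γ :=
    IsBoundedUnder.isCoboundedUnder_le (isBoundedUnder_of ⟨0, fun n => hγ0 n⟩)
  have htopc : Tendsto (fun n => (r +
      ‖((r : ℂ) • Q n - star (a * Q n) * K n * (a * Q n))
        + (star (a * Q n) * K n * (a * Q n)
            - star (((1:A) - P n) * (a * Q n)) * K n * (((1:A) - P n) * (a * Q n)))
        + (γ n : ℂ) • (star (((1:A) - P n) * (a * Q n)) * (((1:A) - P n) * (a * Q n))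
            - (t : ℂ) • Q n)‖) / t) atTop (nhds (r / t)) := by
    have := (hκten.const_add r).div_const t
    simpa using this
  have hdiv : ∀ n, γ n ≤ (r +
      ‖((r : ℂ) • Q n - star (a * Q n) * K n * (a * Q n))
        + (star (a * Q n) * K n * (a * Q n)
            - star (((1:A) - P n) * (a * Q n)) * K n * (((1:A) - P n) * (a * Q n)))
        + (γ n : ℂ) • (star (((1:A) - P n) * (a * Q n)) * (((1:A) - P n) * (a * Q n))
            - (t : ℂ) • Q n)‖) / t := fun n => (le_div_iff₀ htpos).mpr (hkey n)
  have hls : limsup γ atTop ≤ r / t :=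
    le_trans (limsup_le_limsup (Eventually.of_forall hdiv) hcb htopc.isBoundedUnder_le)
      (le_of_eq htopc.limsup_eq)
  calc limsup γ atTop * t ≤ (r / t) * t := mul_le_mul_of_nonneg_right hls ht0
    _ = r := div_mul_cancel₀ r (ne_of_gt htpos)
end

section
/- Let 𝔼 : M_k → M_k be a primitive, unital completely positive transfer map with 𝔼(B) = Σ_i v_i* B v_i, 𝔼(1) = 1, invariant faithful density matrix ρ (𝔼^t(ρ) = ρ), and ‖𝔼ⁿ − 𝔼^∞‖ ≤ c λⁿ where 𝔼^∞(B) = Tr(ρB)·1 and λ ∈ [0,1). For the MPS vectors Γ_{[l,r]}(B) = Σ Tr(B v_{i_l}⋯v_{i_r}) |i_l…i_r⟩ the bound |⟨Γ_{[l,r]}(B), Γ_{[l,r]}(C)⟩ − Tr(ρ B* C)| ≤ c Tr(ρ⁻¹) λ^{r−l+1} ‖B‖_ρ ‖C‖_ρ holds, where ‖B‖_ρ² = Tr(ρ B*B). In particular, (1 − c Tr(ρ⁻¹) λ^{r−l+1}) ‖B‖_ρ² ≤ ‖Γ_{[l,r]}(B)‖² ≤ (1 + c Tr(ρ⁻¹)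 λ^{r−l+1}) ‖B‖_ρ², so Γ_{[l,r]} is injective once c Tr(ρ⁻¹) λ^{r−l+1} < 1. -/
open scoped ComplexOrder Matrix

/-- The matrix product state vector `Γ_{[l,r]}(B)` on a chain of `L = r − l + 1` sites,
with entries `⟨i_1…i_L | Γ(B)⟩ = Tr(B v_{i_1} ⋯ v_{i_L})`. -/
noncomputable def mpsVec {d k : ℕ} (v : Fin d → Matrix (Fin k) (Fin k) ℂ) (L : ℕ)
    (B : Matrix (Fin k) (Fin k) ℂ) : EuclideanSpace ℂ (Fin L → Fin d) :=
  (WithLp.equiv 2 _).symm fun i => (B * (List.ofFn fun j => v (i j)).prod).trace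

/-- The iterated transfer operator `𝔼ⁿ(B)`, with `𝔼(B) = ∑ i, v_i* B v_i`. -/
noncomputable def transferIter {d k : ℕ} (v : Fin d → Matrix (Fin k) (Fin k) ℂ) (n : ℕ)
    (B : Matrix (Fin k) (Fin k) ℂ) : Matrix (Fin k) (Fin k) ℂ :=
  (fun B => ∑ i, (v i)ᴴ * B * v i)^[n] B

/-- The `ρ`-weighted norm `‖B‖_ρ = √(Tr(ρ B* B))` on matrices. -/
noncomputable def rhoNorm {k : ℕ} (ρ B : Matrix (Fin k) (Fin k) ℂ) : ℝ :=
  Real.sqrt ((ρ * Bᴴ * B).trace.re)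

/-- The operator norm of a matrix, acting on Euclidean space. -/
noncomputable def matOpNorm {k : ℕ} (B : Matrix (Fin k) (Fin k) ℂ) : ℝ :=
  ‖LinearMap.toContinuousLinearMap (Matrix.toEuclideanLin B)‖

namespace MPSAux

open Matrix

/-- The word matrix `v_{i_1} ⋯ v_{i_n}`. -/
noncomputable def mpsW {d k : ℕ} (v : Fin d → Matrix (Fin k) (Fin k) ℂ) (n : ℕ)
    (i : Fin n → Fin d) : Matrix (Fin k) (Fin k) ℂ :=
  (List.ofFn fun j => v (i j)).prod

lemma mpsW_cons {d k : ℕ} (v : Fin d → Matrix (Fin k) (Fin k) ℂ) (n : ℕ) (x : Fin d)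
    (i : Fin n → Fin d) : mpsW v (n+1) (Fin.cons x i) = v x * mpsW v n i := by
  simp [mpsW, List.ofFn_succ]

lemma transferIter_eq_sum {d k : ℕ} (v : Fin d → Matrix (Fin k) (Fin k) ℂ) (n : ℕ)
    (X : Matrix (Fin k) (Fin k) ℂ) :
    transferIter v n X = ∑ i : Fin n → Fin d, (mpsW v n i)ᴴ * X * mpsW v n i := by
  induction n generalizing X with
  | zero =>
      simp [transferIter, mpsW]
  | succ n ih =>
      rw [transferIter, Function.iterate_succ_apply, ← transferIter, ih]
      rw [← (Fin.consEquiv (fun _ : Fin (n+1) => Fin d)).sum_comp]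
      rw [Fintype.sum_prod_type]
      rw [Finset.sum_comm]
      refine Finset.sum_congr rfl fun i _ => ?_
      rw [Finset.mul_sum, Finset.sum_mul]
      refine Finset.sum_congr rfl fun x _ => ?_
      show _ = (mpsW v (n+1) (Fin.cons x i))ᴴ * X * mpsW v (n+1) (Fin.cons x i)
      rw [mpsW_cons, conjTranspose_mul]
      noncomm_ring

lemma inner_mpsVec {d k : ℕ} (v : Fin d → Matrix (Fin k) (Fin k) ℂ) (L : ℕ)
    (B C : Matrix (Fin k) (Fin k) ℂ) :
    (inner ℂ (mpsVec v L B) (mpsVec v L C) : ℂ) =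
      ∑ i : Fin L → Fin d, (starRingEnd ℂ) ((B * mpsW v L i).trace) * (C * mpsW v L i).trace := by
  simp [mpsVec, PiLp.inner_apply, mpsW]
  exact Finset.sum_congr rfl fun i _ => mul_comm _ _

lemma norm_mulVec_le {k : ℕ} (M : Matrix (Fin k) (Fin k) ℂ) (x : Fin k → ℂ) :
    ‖(WithLp.equiv 2 (Fin k → ℂ)).symm (M *ᵥ x)‖ ≤
      matOpNorm M * ‖(WithLp.equiv 2 (Fin k → ℂ)).symm x‖ := by
  have : (WithLp.equiv 2 (Fin k → ℂ)).symm (M *ᵥ x)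
      = LinearMap.toContinuousLinearMap (Matrix.toEuclideanLin M)
          ((WithLp.equiv 2 (Fin k → ℂ)).symm x) := by
    simp [Matrix.toEuclideanLin_apply]
  rw [this]
  exact ContinuousLinearMap.le_opNorm _ _

lemma abs_dot_le {k : ℕ} (x y : Fin k → ℂ) :
    ‖star x ⬝ᵥ y‖ ≤ ‖(WithLp.equiv 2 (Fin k → ℂ)).symm x‖ *
      ‖(WithLp.equiv 2 (Fin k → ℂ)).symm y‖ := by
  have h : (star x ⬝ᵥ y) =
      (inner ℂ ((WithLp.equiv 2 (Fin k → ℂ)).symm x) ((WithLp.equiv 2 (Fin k → ℂ)).symm y) : ℂ) := by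
    simp [PiLp.inner_apply, dotProduct, mul_comm]
  rw [h]
  exact norm_inner_le_norm (𝕜 := ℂ) _ _

lemma vecMulVec_mulVec' {k : ℕ} (x y z : Fin k → ℂ) :
    vecMulVec x y *ᵥ z = (y ⬝ᵥ z) • x := by
  funext a
  simp [vecMulVec_apply, mulVec, dotProduct, Finset.mul_sum, Finset.sum_mul]
  ring_nf

lemma matOpNorm_vecMulVec_le {k : ℕ} (x y : Fin k → ℂ) :
    matOpNorm (vecMulVec x (star y)) ≤
      ‖(WithLp.equiv 2 (Fin k → ℂ)).symm x‖ * ‖(WithLp.equiv 2 (Fin k → ℂ)).symm y‖ := by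
  refine ContinuousLinearMap.opNorm_le_bound _ (by positivity) fun z => ?_
  have hz : LinearMap.toContinuousLinearMap (Matrix.toEuclideanLin (vecMulVec x (star y))) z
      = (WithLp.equiv 2 (Fin k → ℂ)).symm ((star y ⬝ᵥ (WithLp.equiv 2 (Fin k → ℂ)) z) • x) := by
    simp [Matrix.toEuclideanLin_apply, vecMulVec_mulVec']
  rw [hz]
  have h1 : (WithLp.equiv 2 (Fin k → ℂ)).symm ((star y ⬝ᵥ (WithLp.equiv 2 (Fin k → ℂ)) z) • x)
      = (star y ⬝ᵥ (WithLp.equiv 2 (Fin k → ℂ)) z) • (WithLp.equiv 2 (Fin k → ℂ)).symm x := rfl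
  rw [h1, norm_smul]
  have h2 := abs_dot_le y ((WithLp.equiv 2 (Fin k → ℂ)) z)
  have h3 : (WithLp.equiv 2 (Fin k → ℂ)).symm ((WithLp.equiv 2 (Fin k → ℂ)) z) = z := by simp
  rw [h3] at h2
  calc ‖star y ⬝ᵥ (WithLp.equiv 2 (Fin k → ℂ)) z‖ * ‖(WithLp.equiv 2 (Fin k → ℂ)).symm x‖
      ≤ (‖(WithLp.equiv 2 (Fin k → ℂ)).symm y‖ * ‖z‖) * ‖(WithLp.equiv 2 (Fin k → ℂ)).symm x‖ :=
        mul_le_mul_of_nonneg_right h2 (norm_nonneg _)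
    _ = ‖(WithLp.equiv 2 (Fin k → ℂ)).symm x‖ * ‖(WithLp.equiv 2 (Fin k → ℂ)).symm y‖ * ‖z‖ := by
        ring

lemma entry_conj {k : ℕ} (U M : Matrix (Fin k) (Fin k) ℂ) (b d : Fin k) :
    (Uᴴ * M * U) b d = star (fun a => U a b) ⬝ᵥ (M *ᵥ fun a => U a d) := by
  simp only [mul_apply, conjTranspose_apply, dotProduct, mulVec, Pi.star_apply,
    Finset.sum_mul, Finset.mul_sum]
  rw [Finset.sum_comm]
  refine Finset.sum_congr rfl fun a _ => Finset.sum_congr rfl fun c _ => by ring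

lemma star_dot_conjT {k : ℕ} (M : Matrix (Fin k) (Fin k) ℂ) (x y : Fin k → ℂ) :
    star x ⬝ᵥ (Mᴴ *ᵥ y) = star (M *ᵥ x) ⬝ᵥ y := by
  rw [star_mulVec, dotProduct_mulVec]

lemma trace_mul_vecMulVec {k : ℕ} (M : Matrix (Fin k) (Fin k) ℂ) (x y : Fin k → ℂ) :
    (M * vecMulVec x y).trace = y ⬝ᵥ (M *ᵥ x) := by
  simp only [trace, diag, mul_apply, vecMulVec_apply, dotProduct, mulVec, Finset.mul_sum]
  refine Finset.sum_congr rfl fun a _ => Finset.sum_congr rfl fun c _ => by ring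

lemma sum_mulVec' {k : ℕ} {ι : Type*} (s : Finset ι) (M : ι → Matrix (Fin k) (Fin k) ℂ)
    (y : Fin k → ℂ) : (∑ i ∈ s, M i) *ᵥ y = ∑ i ∈ s, M i *ᵥ y := by
  funext a
  simp only [mulVec, dotProduct, Matrix.sum_apply, Finset.sum_mul]
  rw [Finset.sum_comm]
  simp [Finset.sum_apply, mulVec, dotProduct]

lemma dot_sum' {k : ℕ} {ι : Type*} (s : Finset ι) (x : Fin k → ℂ) (f : ι → (Fin k → ℂ)) :
    x ⬝ᵥ (∑ i ∈ s, f i) = ∑ i ∈ s, x ⬝ᵥ f i := by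
  simp [dotProduct, Finset.sum_apply, Finset.mul_sum]
  rw [Finset.sum_comm]

lemma trace_diagonal_mul' {k : ℕ} (f : Fin k → ℂ) (N : Matrix (Fin k) (Fin k) ℂ) :
    (diagonal f * N).trace = ∑ b, f b * N b b := by
  simp [trace, diag, diagonal_mul]

lemma trace_conj_unitary {k : ℕ} {U : Matrix (Fin k) (Fin k) ℂ} (hU2 : U * Uᴴ = 1)
    (N : Matrix (Fin k) (Fin k) ℂ) : (Uᴴ * N * U).trace = N.trace := by
  rw [trace_mul_cycle, hU2, one_mul]

lemma star_dot_self {k : ℕ} (x : Fin k → ℂ) :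
    star x ⬝ᵥ x = ((‖(WithLp.equiv 2 (Fin k → ℂ)).symm x‖ ^ 2 : ℝ) : ℂ) := by
  have h := inner_self_eq_norm_sq_to_K (𝕜 := ℂ) ((WithLp.equiv 2 (Fin k → ℂ)).symm x)
  have h2 : (inner ℂ ((WithLp.equiv 2 (Fin k → ℂ)).symm x)
      ((WithLp.equiv 2 (Fin k → ℂ)).symm x) : ℂ) = star x ⬝ᵥ x := by
    rw [PiLp.inner_apply]
    simp [dotProduct, Complex.conj_mul']
  rw [h2] at h
  rw [h]
  norm_cast

lemma overlap_key {d k : ℕ} (v : Fin d → Matrix (Fin k) (Fin k) ℂ) (L : ℕ)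
    {U : Matrix (Fin k) (Fin k) ℂ} (hU2 : U * Uᴴ = 1)
    (u : Fin k → (Fin k → ℂ)) (hu : ∀ b a, u b a = U a b)
    (B C : Matrix (Fin k) (Fin k) ℂ) :
    (inner ℂ (mpsVec v L B) (mpsVec v L C) : ℂ) =
      ∑ b, ∑ d, star (B *ᵥ u b) ⬝ᵥ
        ((transferIter v L (vecMulVec (u b) (star (u d)))) *ᵥ (C *ᵥ u d)) := by
  have hue : ∀ b, u b = fun a => U a b := fun b => funext (hu b)
  rw [inner_mpsVec]
  have e1 : ∀ i, (starRingEnd ℂ) ((B * mpsW v L i).trace)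
      = ∑ b, star (B *ᵥ u b) ⬝ᵥ ((mpsW v L i)ᴴ *ᵥ u b) := by
    intro i
    have h1 : (starRingEnd ℂ) ((B * mpsW v L i).trace) = ((B * mpsW v L i)ᴴ).trace := by
      rw [trace_conjTranspose]; rfl
    rw [h1, conjTranspose_mul, trace_mul_comm, ← trace_conj_unitary hU2]
    rw [trace]
    refine Finset.sum_congr rfl fun b _ => ?_
    rw [diag, entry_conj, ← hue b, ← mulVec_mulVec, star_dot_conjT]
  have e2 : ∀ i, ((C * mpsW v L i).trace)
      = ∑ b, star (u b) ⬝ᵥ (mpsW v L i *ᵥ (C *ᵥ u b)) := by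
    intro i
    rw [trace_mul_comm, ← trace_conj_unitary hU2, trace]
    refine Finset.sum_congr rfl fun b _ => ?_
    rw [diag, entry_conj, ← hue b, ← mulVec_mulVec]
  calc ∑ i : Fin L → Fin d, (starRingEnd ℂ) ((B * mpsW v L i).trace) * (C * mpsW v L i).trace
      = ∑ i : Fin L → Fin d, ∑ b, ∑ d', (star (B *ᵥ u b) ⬝ᵥ ((mpsW v L i)ᴴ *ᵥ u b))
          * (star (u d') ⬝ᵥ (mpsW v L i *ᵥ (C *ᵥ u d'))) := by
        refine Finset.sum_congr rfl fun i _ => ?_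
        rw [e1 i, e2 i, Finset.sum_mul_sum]
    _ = ∑ b, ∑ d', ∑ i : Fin L → Fin d, (star (B *ᵥ u b) ⬝ᵥ ((mpsW v L i)ᴴ *ᵥ u b))
          * (star (u d') ⬝ᵥ (mpsW v L i *ᵥ (C *ᵥ u d'))) := by
        rw [Finset.sum_comm]
        exact Finset.sum_congr rfl fun b _ => Finset.sum_comm
    _ = ∑ b, ∑ d', star (B *ᵥ u b) ⬝ᵥ
        ((transferIter v L (vecMulVec (u b) (star (u d')))) *ᵥ (C *ᵥ u d')) := by
        refine Finset.sum_congr rfl fun b _ => Finset.sum_congr rfl fun d' _ => ?_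
        rw [transferIter_eq_sum, sum_mulVec', dot_sum']
        refine (Finset.sum_congr rfl fun i _ => ?_).symm
        rw [← mulVec_mulVec, ← mulVec_mulVec, vecMulVec_mulVec', mulVec_smul,
          dotProduct_smul]
        rw [smul_eq_mul, mul_comm]

lemma diag_sum_eq_trace {k : ℕ} {U ρ : Matrix (Fin k) (Fin k) ℂ} (hU2 : U * Uᴴ = 1)
    {f : Fin k → ℂ} (hD : Uᴴ * ρ * U = diagonal f)
    (u : Fin k → (Fin k → ℂ)) (hu : ∀ b a, u b a = U a b)
    (B C : Matrix (Fin k) (Fin k) ℂ) :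
    ∑ b, f b * (star (B *ᵥ u b) ⬝ᵥ (C *ᵥ u b)) = (ρ * Bᴴ * C).trace := by
  have hue : ∀ b, u b = fun a => U a b := fun b => funext (hu b)
  calc ∑ b, f b * (star (B *ᵥ u b) ⬝ᵥ (C *ᵥ u b))
      = ∑ b, f b * (Uᴴ * (Bᴴ * C) * U) b b := by
        refine Finset.sum_congr rfl fun b _ => ?_
        rw [entry_conj, ← hue b, ← mulVec_mulVec, ← star_dot_conjT]
    _ = (diagonal f * (Uᴴ * (Bᴴ * C) * U)).trace := (trace_diagonal_mul' _ _).symm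
    _ = (Uᴴ * (ρ * (Bᴴ * C)) * U).trace := by
        rw [← hD]
        have h : Uᴴ * ρ * U * (Uᴴ * (Bᴴ * C) * U) = Uᴴ * ρ * (U * Uᴴ) * (Bᴴ * C) * U := by
          noncomm_ring
        rw [h, hU2, mul_one]
        noncomm_ring
    _ = (ρ * Bᴴ * C).trace := by rw [trace_conj_unitary hU2, mul_assoc]

lemma main_term {k : ℕ} {U ρ : Matrix (Fin k) (Fin k) ℂ} (hU2 : U * Uᴴ = 1)
    {f : Fin k → ℂ} (hD : Uᴴ * ρ * U = diagonal f)
    (u : Fin k → (Fin k → ℂ)) (hu : ∀ b a, u b a = U a b)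
    (B C : Matrix (Fin k) (Fin k) ℂ) :
    ∑ b, ∑ d', (ρ * vecMulVec (u b) (star (u d'))).trace * (star (B *ᵥ u b) ⬝ᵥ (C *ᵥ u d'))
      = (ρ * Bᴴ * C).trace := by
  have hue : ∀ b, u b = fun a => U a b := fun b => funext (hu b)
  have htr : ∀ b d', (ρ * vecMulVec (u b) (star (u d'))).trace
      = if d' = b then f d' else 0 := by
    intro b d'
    rw [trace_mul_vecMulVec, hue b, hue d', ← entry_conj, hD, diagonal_apply]
  calc ∑ b, ∑ d', (ρ * vecMulVec (u b) (star (u d'))).trace * (star (B *ᵥ u b) ⬝ᵥ (C *ᵥ u d'))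
      = ∑ b, ∑ d', if d' = b then f d' * (star (B *ᵥ u b) ⬝ᵥ (C *ᵥ u d')) else 0 := by
        refine Finset.sum_congr rfl fun b _ => Finset.sum_congr rfl fun d' _ => ?_
        rw [htr, ite_mul, zero_mul]
    _ = ∑ b, f b * (star (B *ᵥ u b) ⬝ᵥ (C *ᵥ u b)) := by
        refine Finset.sum_congr rfl fun b _ => ?_
        rw [Finset.sum_ite_eq' Finset.univ b fun d' => f d' * (star (B *ᵥ u b) ⬝ᵥ (C *ᵥ u d'))]
        simp
    _ = (ρ * Bᴴ * C).trace := diag_sum_eq_trace hU2 hD u hu B C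

end MPSAux

open MPSAux Matrix in
set_option maxHeartbeats 1600000 in
/-- **Lemma B.1 / equations (B.6)–(B.8)** for a primitive translation-invariant MPS:
`|⟨Γ_{[l,r]}(B), Γ_{[l,r]}(C)⟩ − Tr(ρ B* C)| ≤ c Tr(ρ⁻¹) λ^{r−l+1} ‖B‖_ρ ‖C‖_ρ`,
the resulting two-sided bound on `‖Γ_{[l,r]}(B)‖²`, and injectivity of `Γ_{[l,r]}`
once `c Tr(ρ⁻¹) λ^{r−l+1} < 1`.  Here `L = r − l + 1` is the number of sites. -/
theorem mps_overlap_estimates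
    {d k : ℕ} (v : Fin d → Matrix (Fin k) (Fin k) ℂ)
    (hunital : ∑ i, (v i)ᴴ * v i = 1)
    (ρ : Matrix (Fin k) (Fin k) ℂ) (hρ : ρ.PosDef) (hρtr : ρ.trace = 1)
    (hinv : ∑ i, v i * ρ * (v i)ᴴ = ρ)
    (c lam : ℝ) (hc : 0 ≤ c) (hlam0 : 0 ≤ lam) (hlam1 : lam < 1)
    (hconv : ∀ (n : ℕ) (B : Matrix (Fin k) (Fin k) ℂ),
        matOpNorm (transferIter v n B - (ρ * B).trace • (1 : Matrix (Fin k) (Fin k) ℂ)) ≤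
          c * lam ^ n * matOpNorm B)
    (L : ℕ) :
    (∀ B C : Matrix (Fin k) (Fin k) ℂ,
        ‖(inner ℂ (mpsVec v L B) (mpsVec v L C) : ℂ) - (ρ * Bᴴ * C).trace‖ ≤
          c * (ρ⁻¹.trace).re * lam ^ L * rhoNorm ρ B * rhoNorm ρ C) ∧
      (∀ B : Matrix (Fin k) (Fin k) ℂ,
        (1 - c * (ρ⁻¹.trace).re * lam ^ L) * rhoNorm ρ B ^ 2 ≤ ‖mpsVec v L B‖ ^ 2 ∧
          ‖mpsVec v L B‖ ^ 2 ≤ (1 + c * (ρ⁻¹.trace).re * lam ^ L) * rhoNorm ρ B ^ 2) ∧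
      (c * (ρ⁻¹.trace).re * lam ^ L < 1 → Function.Injective (mpsVec v L)) := by
  classical
  have hH : ρ.IsHermitian := hρ.1
  set U : Matrix (Fin k) (Fin k) ℂ :=
    (Matrix.IsHermitian.eigenvectorUnitary hH : Matrix (Fin k) (Fin k) ℂ) with hUdef
  set w : Fin k → ℝ := hH.eigenvalues with hwdef
  have hw : ∀ b, 0 < w b := fun b => hρ.eigenvalues_pos b
  have hU1 : Uᴴ * U = 1 := by
    have := (Matrix.IsHermitian.eigenvectorUnitary hH).2
    rw [Matrix.mem_unitaryGroup_iff'] at this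
    simpa [star_eq_conjTranspose] using this
  have hU2 : U * Uᴴ = 1 := by
    have := (Matrix.IsHermitian.eigenvectorUnitary hH).2
    rw [Matrix.mem_unitaryGroup_iff] at this
    simpa [star_eq_conjTranspose] using this
  have hspec : ρ = U * diagonal (fun b => (w b : ℂ)) * Uᴴ := by
    have := hH.spectral_theorem
    simpa [star_eq_conjTranspose, Function.comp_def] using this
  have hD : Uᴴ * ρ * U = diagonal (fun b => (w b : ℂ)) := by
    rw [hspec]
    have h1 : Uᴴ * (U * diagonal (fun b => (w b : ℂ)) * Uᴴ) * U
        = (Uᴴ * U) * diagonal (fun b => (w b : ℂ)) * (Uᴴ * U) := by noncomm_ring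
    rw [h1, hU1, one_mul, mul_one]
  have hρinv : ρ⁻¹ = U * diagonal (fun b => ((w b : ℂ))⁻¹) * Uᴴ := by
    refine inv_eq_right_inv ?_
    rw [hspec]
    have h1 : U * diagonal (fun b => (w b : ℂ)) * Uᴴ *
        (U * diagonal (fun b => ((w b : ℂ))⁻¹) * Uᴴ)
        = U * (diagonal (fun b => (w b : ℂ)) * (Uᴴ * U) *
            diagonal (fun b => ((w b : ℂ))⁻¹)) * Uᴴ := by noncomm_ring
    rw [h1, hU1, mul_one, diagonal_mul_diagonal]
    have h2 : ∀ b, (w b : ℂ) * ((w b : ℂ))⁻¹ = 1 := fun b =>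
      mul_inv_cancel₀ (by exact_mod_cast (hw b).ne')
    simp only [h2]
    simp [diagonal_one, hU2]
  have htrinv : (ρ⁻¹.trace).re = ∑ b, (w b)⁻¹ := by
    rw [hρinv, trace_mul_cycle, hU1, one_mul, trace_diagonal]
    simp
  have htrinv_nonneg : 0 ≤ (ρ⁻¹.trace).re := by
    rw [htrinv]
    exact Finset.sum_nonneg fun b _ => inv_nonneg.2 (hw b).le
  set u : Fin k → (Fin k → ℂ) := fun b a => U a b with hudef
  have hu : ∀ b a, u b a = U a b := fun _ _ => rfl
  -- unit column norms
  have hub : ∀ b, ‖(WithLp.equiv 2 (Fin k → ℂ)).symm (u b)‖ = 1 := by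
    intro b
    have h2 := entry_conj U 1 b b
    rw [mul_one, hU1] at h2
    rw [one_mulVec] at h2
    have h3 : star (u b) ⬝ᵥ u b = 1 := by
      rw [hudef]
      have : (1 : Matrix (Fin k) (Fin k) ℂ) b b = 1 := by simp [Matrix.one_apply]
      rw [← h2, this]
    rw [star_dot_self] at h3
    have h4 : ‖(WithLp.equiv 2 (Fin k → ℂ)).symm (u b)‖ ^ 2 = 1 := by exact_mod_cast h3
    have h5 : (0 : ℝ) ≤ ‖(WithLp.equiv 2 (Fin k → ℂ)).symm (u b)‖ := norm_nonneg _
    nlinarith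
  -- the ρ-norm in eigencoordinates
  set F : Matrix (Fin k) (Fin k) ℂ → Fin k → ℝ :=
    fun B b => ‖(WithLp.equiv 2 (Fin k → ℂ)).symm (B *ᵥ u b)‖ with hFdef
  have htr_diag : ∀ B : Matrix (Fin k) (Fin k) ℂ,
      (ρ * Bᴴ * B).trace = ((∑ b, w b * F B b ^ 2 : ℝ) : ℂ) := by
    intro B
    rw [← diag_sum_eq_trace hU2 hD u hu B B]
    push_cast
    refine Finset.sum_congr rfl fun b _ => ?_
    rw [star_dot_self]
    push_cast
    ring
  have hre : ∀ B : Matrix (Fin k) (Fin k) ℂ,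
      (ρ * Bᴴ * B).trace.re = ∑ b, w b * F B b ^ 2 := by
    intro B; rw [htr_diag]; exact Complex.ofReal_re _
  have hsum_nonneg : ∀ B : Matrix (Fin k) (Fin k) ℂ, 0 ≤ ∑ b, w b * F B b ^ 2 :=
    fun B => Finset.sum_nonneg fun b _ => mul_nonneg (hw b).le (sq_nonneg _)
  have hrho_sq : ∀ B : Matrix (Fin k) (Fin k) ℂ,
      rhoNorm ρ B ^ 2 = ∑ b, w b * F B b ^ 2 := by
    intro B
    rw [rhoNorm, hre, Real.sq_sqrt (hsum_nonneg B)]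
  have hrho_nonneg : ∀ B : Matrix (Fin k) (Fin k) ℂ, 0 ≤ rhoNorm ρ B :=
    fun B => Real.sqrt_nonneg _
  -- Cauchy–Schwarz
  have hCS : ∀ B : Matrix (Fin k) (Fin k) ℂ,
      (∑ b, F B b) ≤ Real.sqrt ((ρ⁻¹.trace).re) * rhoNorm ρ B := by
    intro B
    have h1 : (∑ b, F B b) ^ 2 ≤ (∑ b, (w b)⁻¹) * (∑ b, w b * F B b ^ 2) := by
      refine Finset.sum_sq_le_sum_mul_sum_of_sq_eq_mul Finset.univ
        (fun b _ => inv_nonneg.2 (hw b).le)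
        (fun b _ => mul_nonneg (hw b).le (sq_nonneg _))
        (fun b _ => ?_)
      field_simp [(hw b).ne']
    have h2 : (0:ℝ) ≤ ∑ b, F B b := Finset.sum_nonneg fun b _ => norm_nonneg _
    calc (∑ b, F B b) = Real.sqrt ((∑ b, F B b) ^ 2) := (Real.sqrt_sq h2).symm
      _ ≤ Real.sqrt ((∑ b, (w b)⁻¹) * (∑ b, w b * F B b ^ 2)) := Real.sqrt_le_sqrt h1
      _ = Real.sqrt ((ρ⁻¹.trace).re) * rhoNorm ρ B := by
          rw [Real.sqrt_mul (Finset.sum_nonneg fun b _ => inv_nonneg.2 (hw b).le), htrinv,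
            rhoNorm, hre]
  -- part 1
  have part1 : ∀ B C : Matrix (Fin k) (Fin k) ℂ,
      ‖(inner ℂ (mpsVec v L B) (mpsVec v L C) : ℂ) - (ρ * Bᴴ * C).trace‖ ≤
        c * (ρ⁻¹.trace).re * lam ^ L * rhoNorm ρ B * rhoNorm ρ C := by
    intro B C
    have hsplit : (inner ℂ (mpsVec v L B) (mpsVec v L C) : ℂ) - (ρ * Bᴴ * C).trace
        = ∑ b, ∑ d', star (B *ᵥ u b) ⬝ᵥ
            ((transferIter v L (vecMulVec (u b) (star (u d')))
              - (ρ * vecMulVec (u b) (star (u d'))).trace • 1) *ᵥ (C *ᵥ u d')) := by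
      rw [overlap_key v L hU2 u hu B C, ← main_term hU2 hD u hu B C,
        ← Finset.sum_sub_distrib]
      refine Finset.sum_congr rfl fun b _ => ?_
      rw [← Finset.sum_sub_distrib]
      refine Finset.sum_congr rfl fun d' _ => ?_
      rw [sub_mulVec, dotProduct_sub, smul_mulVec, one_mulVec, dotProduct_smul,
        smul_eq_mul]
    rw [hsplit]
    have hterm : ∀ b d', ‖star (B *ᵥ u b) ⬝ᵥ
        ((transferIter v L (vecMulVec (u b) (star (u d')))
          - (ρ * vecMulVec (u b) (star (u d'))).trace • 1) *ᵥ (C *ᵥ u d'))‖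
        ≤ (c * lam ^ L) * (F B b * F C d') := by
      intro b d'
      set Δ := transferIter v L (vecMulVec (u b) (star (u d')))
        - (ρ * vecMulVec (u b) (star (u d'))).trace • 1 with hΔ
      have h1 : ‖star (B *ᵥ u b) ⬝ᵥ (Δ *ᵥ (C *ᵥ u d'))‖ ≤
          F B b * ‖(WithLp.equiv 2 (Fin k → ℂ)).symm (Δ *ᵥ (C *ᵥ u d'))‖ := by
        exact abs_dot_le (B *ᵥ u b) (Δ *ᵥ (C *ᵥ u d'))
      have h2 : ‖(WithLp.equiv 2 (Fin k → ℂ)).symm (Δ *ᵥ (C *ᵥ u d'))‖ ≤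
          matOpNorm Δ * F C d' := norm_mulVec_le Δ _
      have h3 : matOpNorm Δ ≤ c * lam ^ L * matOpNorm (vecMulVec (u b) (star (u d'))) :=
        hconv L _
      have h4 : matOpNorm (vecMulVec (u b) (star (u d'))) ≤ 1 := by
        have := matOpNorm_vecMulVec_le (u b) (u d')
        rw [hub b, hub d'] at this
        simpa using this
      have h5 : matOpNorm Δ ≤ c * lam ^ L := by
        have : c * lam ^ L * matOpNorm (vecMulVec (u b) (star (u d'))) ≤ c * lam ^ L * 1 :=
          mul_le_mul_of_nonneg_left h4 (mul_nonneg hc (pow_nonneg hlam0 L))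
        rw [mul_one] at this
        exact h3.trans this
      have h6 : (0:ℝ) ≤ F B b := norm_nonneg _
      have h7 : (0:ℝ) ≤ F C d' := norm_nonneg _
      have h8 : (0:ℝ) ≤ matOpNorm Δ := norm_nonneg _
      calc ‖star (B *ᵥ u b) ⬝ᵥ (Δ *ᵥ (C *ᵥ u d'))‖
          ≤ F B b * (matOpNorm Δ * F C d') := le_trans h1 (by
            exact mul_le_mul_of_nonneg_left h2 h6)
        _ ≤ F B b * ((c * lam ^ L) * F C d') := by
            refine mul_le_mul_of_nonneg_left ?_ h6
            exact mul_le_mul_of_nonneg_right h5 h7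
        _ = (c * lam ^ L) * (F B b * F C d') := by ring
    calc ‖∑ b, ∑ d', star (B *ᵥ u b) ⬝ᵥ
        ((transferIter v L (vecMulVec (u b) (star (u d')))
          - (ρ * vecMulVec (u b) (star (u d'))).trace • 1) *ᵥ (C *ᵥ u d'))‖
        ≤ ∑ b, ∑ d', (c * lam ^ L) * (F B b * F C d') := by
          refine (norm_sum_le _ _).trans ?_
          refine Finset.sum_le_sum fun b _ => ?_
          exact (norm_sum_le _ _).trans (Finset.sum_le_sum fun d' _ => hterm b d')
      _ = (c * lam ^ L) * ((∑ b, F B b) * (∑ d', F C d')) := by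
          rw [Finset.sum_mul_sum]
          simp [Finset.mul_sum]
      _ ≤ (c * lam ^ L) * ((Real.sqrt ((ρ⁻¹.trace).re) * rhoNorm ρ B) *
            (Real.sqrt ((ρ⁻¹.trace).re) * rhoNorm ρ C)) := by
          refine mul_le_mul_of_nonneg_left ?_ (mul_nonneg hc (pow_nonneg hlam0 L))
          refine mul_le_mul (hCS B) (hCS C)
            (Finset.sum_nonneg fun b _ => norm_nonneg _)
            (mul_nonneg (Real.sqrt_nonneg _) (hrho_nonneg B))
      _ = c * (ρ⁻¹.trace).re * lam ^ L * rhoNorm ρ B * rhoNorm ρ C := by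
          rw [show Real.sqrt ((ρ⁻¹.trace).re) * rhoNorm ρ B *
              (Real.sqrt ((ρ⁻¹.trace).re) * rhoNorm ρ C)
              = (Real.sqrt ((ρ⁻¹.trace).re) * Real.sqrt ((ρ⁻¹.trace).re)) *
                (rhoNorm ρ B * rhoNorm ρ C) from by ring,
            Real.mul_self_sqrt htrinv_nonneg]
          ring
  -- part 2
  have part2 : ∀ B : Matrix (Fin k) (Fin k) ℂ,
      (1 - c * (ρ⁻¹.trace).re * lam ^ L) * rhoNorm ρ B ^ 2 ≤ ‖mpsVec v L B‖ ^ 2 ∧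
        ‖mpsVec v L B‖ ^ 2 ≤ (1 + c * (ρ⁻¹.trace).re * lam ^ L) * rhoNorm ρ B ^ 2 := by
    intro B
    have h1 := part1 B B
    have h2 : (inner ℂ (mpsVec v L B) (mpsVec v L B) : ℂ) = ((‖mpsVec v L B‖ ^ 2 : ℝ) : ℂ) := by
      rw [inner_self_eq_norm_sq_to_K]
      norm_cast
    have h3 : (ρ * Bᴴ * B).trace = ((rhoNorm ρ B ^ 2 : ℝ) : ℂ) := by
      rw [htr_diag, hrho_sq]
    rw [h2, h3] at h1
    have h4 : ((‖mpsVec v L B‖ ^ 2 : ℝ) : ℂ) - ((rhoNorm ρ B ^ 2 : ℝ) : ℂ)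
        = ((‖mpsVec v L B‖ ^ 2 - rhoNorm ρ B ^ 2 : ℝ) : ℂ) := by push_cast; ring
    rw [h4, Complex.norm_real, Real.norm_eq_abs] at h1
    have h5 := abs_le.mp h1
    constructor <;> nlinarith [h5.1, h5.2]
  refine ⟨part1, part2, ?_⟩
  -- part 3: injectivity
  intro hsmall B C hBC
  have hlin : mpsVec v L (B - C) = mpsVec v L B - mpsVec v L C := by
    apply PiLp.ext
    intro i
    simp [mpsVec, WithLp.equiv_symm_apply, Matrix.sub_mul, trace_sub, PiLp.sub_apply]
  have hzero : mpsVec v L (B - C) = 0 := by rw [hlin, hBC, sub_self]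
  have h0 : ‖mpsVec v L (B - C)‖ ^ 2 = 0 := by rw [hzero]; simp
  have hlow := (part2 (B - C)).1
  rw [h0] at hlow
  have hpos : 0 < 1 - c * (ρ⁻¹.trace).re * lam ^ L := by linarith
  have hrzero : rhoNorm ρ (B - C) ^ 2 ≤ 0 := by nlinarith [hrho_nonneg (B - C)]
  have hsum0 : ∑ b, w b * F (B - C) b ^ 2 = 0 := by
    have := hrho_sq (B - C)
    have h6 := hsum_nonneg (B - C)
    nlinarith
  have hFzero : ∀ b, F (B - C) b = 0 := by
    intro b
    have h7 := (Finset.sum_eq_zero_iff_of_nonneg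
      (fun b _ => mul_nonneg (hw b).le (sq_nonneg (F (B - C) b)))).mp hsum0 b
      (Finset.mem_univ b)
    have h8 := (hw b).ne'
    have h9 : F (B - C) b ^ 2 = 0 := by
      rcases mul_eq_zero.mp h7 with h | h
      · exact absurd h h8
      · exact h
    exact sq_eq_zero_iff.mp h9
  have hmv : ∀ b, (B - C) *ᵥ u b = 0 := by
    intro b
    have := hFzero b
    rw [hFdef] at this
    have h10 : (WithLp.equiv 2 (Fin k → ℂ)).symm ((B - C) *ᵥ u b) = 0 :=
      norm_eq_zero.mp this
    funext a
    have := congrFun (congrArg (WithLp.equiv 2 (Fin k → ℂ)) h10) a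
    simpa using this
  have hXU : (B - C) * U = 0 := by
    ext a b
    have := congrFun (hmv b) a
    simpa [mulVec, dotProduct, mul_apply, hu] using this
  have hX : B - C = 0 := by
    have : (B - C) * (U * Uᴴ) = 0 := by rw [← mul_assoc, hXU, zero_mul]
    rwa [hU2, mul_one] at this
  exact sub_eq_zero.mp hX
end
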